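/- arXiv:2210.08687 — 5 statements merged into one kernel-verified Lean document; each statement's English description precedes it below -/
import Mathlib

section
/- Let E ⊂ ℝⁿ be closed with 0 ∈ E, let m ∈ ℕ, and let Ω = Allow(I^m(E)). Then for every δ > 0 there exists r̄ > 0 such that: if Ω ≠ ∅, then every x ∈ E with 0 < |x| < r̄ satisfies dist(x/|x|, Ω) < δ; and if Ω = ∅, then E ∩ B(0,r̄) = {0}. -/
open scoped BigOperators
open MvPolynomial

noncomputable section

abbrev En (n : ℕ) : Type := EuclideanSpace ℝ (Fin n)

/-- Evaluation of a polynomial at a point of ℝⁿ. -/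
def evalP {n : ℕ} (p : MvPolynomial (Fin n) ℝ) (x : En n) : ℝ :=
  MvPolynomial.eval (fun i => x i) p

/-- Truncation of a polynomial to degree ≤ m. -/
def trunc {n : ℕ} (m : ℕ) (p : MvPolynomial (Fin n) ℝ) : MvPolynomial (Fin n) ℝ :=
  ∑ d ∈ p.support,
    if (d.sum fun _ k => k) ≤ m then MvPolynomial.monomial d (p.coeff d) else 0

/-- `p` is the m-jet (m-th degree Taylor polynomial at the origin) of `F`. -/
def IsJet {n : ℕ} (m : ℕ) (F : En n → ℝ) (p : MvPolynomial (Fin n) ℝ) : Prop :=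
  p.totalDegree ≤ m ∧
    ∀ k : ℕ, k ≤ m → iteratedFDeriv ℝ k (fun x => F x - evalP p x) 0 = 0

/-- `I^m(E)`: m-jets at the origin of `C^m` functions vanishing on `E`. -/
def Im {n : ℕ} (m : ℕ) (E : Set (En n)) : Set (MvPolynomial (Fin n) ℝ) :=
  { p | ∃ F : En n → ℝ, ContDiff ℝ (m : ℕ∞) F ∧ (∀ x ∈ E, F x = 0) ∧ IsJet m F p }

/-- First-order partial derivative in the i-th coordinate direction. -/
def pderivE {n : ℕ} (i : Fin n) (F : En n → ℝ) : En n → ℝ :=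
  fun x => fderiv ℝ F x (EuclideanSpace.single i 1)

/-- Iterated partial derivative ∂^α. -/
def pdMulti {n : ℕ} (α : Fin n → ℕ) (F : En n → ℝ) : En n → ℝ :=
  (List.finRange n).foldr (fun i G => (pderivE i)^[α i] G) F

/-- |α|, the order of a multi-index. -/
def mIdeg {n : ℕ} (α : Fin n → ℕ) : ℕ := ∑ i, α i

/-- The cone `Γ(Ω,δ,r)` around a set `Ω` of directions. -/
def coneS {n : ℕ} (Ω : Set (En n)) (δ r : ℝ) : Set (En n) :=
  { x | 0 < ‖x‖ ∧ ‖x‖ < r ∧ ∃ ω ∈ Ω, ‖(‖x‖⁻¹ • x) - ω‖ < δ }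

/-- The cone `Γ(ω,δ,r)` around a single direction. -/
def cone {n : ℕ} (ω : En n) (δ r : ℝ) : Set (En n) := coneS {ω} δ r

/-- `ω` is a forbidden direction of the family `I`. -/
def Forbidden {n : ℕ} (m : ℕ) (I : Set (MvPolynomial (Fin n) ℝ)) (ω : En n) : Prop :=
  ∃ (L : ℕ) (p : Fin L → MvPolynomial (Fin n) ℝ), (∀ l, p l ∈ I) ∧
    ∃ c > 0, ∃ δ > 0, ∃ r > 0, ∀ x ∈ cone ω δ r, c * ‖x‖ ^ m < ∑ l, |evalP (p l) x|

/-- `ω` is an allowed direction of `I`. -/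
def Allowed {n : ℕ} (m : ℕ) (I : Set (MvPolynomial (Fin n) ℝ)) (ω : En n) : Prop :=
  ¬ Forbidden m I ω

/-- The set of allowed directions of `I` in the unit sphere. -/
def AllowSet {n : ℕ} (m : ℕ) (I : Set (MvPolynomial (Fin n) ℝ)) : Set (En n) :=
  { ω | ‖ω‖ = 1 ∧ Allowed m I ω }

/-- `E` is tangent to the direction `ω` at the origin. -/
def Tangent {n : ℕ} (E : Set (En n)) (ω : En n) : Prop :=
  ∀ δ > 0, ∀ r > 0, (E ∩ cone ω δ r).Nonempty

/-- `I` is an ideal in the ring `P₀^m(ℝⁿ)` of m-jets with vanishing constant term,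
with jet (truncated) multiplication. -/
def IsJetIdeal {n : ℕ} (m : ℕ) (I : Set (MvPolynomial (Fin n) ℝ)) : Prop :=
  (∀ p ∈ I, p.totalDegree ≤ m ∧ p.coeff 0 = 0) ∧
    (0 : MvPolynomial (Fin n) ℝ) ∈ I ∧
    (∀ p ∈ I, ∀ q ∈ I, p + q ∈ I) ∧
    ∀ p ∈ I, ∀ q : MvPolynomial (Fin n) ℝ, q.totalDegree ≤ m → trunc m (p * q) ∈ I

/-- The ideal of `P₀^m(ℝⁿ)` generated by a set of jets. -/
def jetSpan {n : ℕ} (m : ℕ) (s : Set (MvPolynomial (Fin n) ℝ)) :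
    Set (MvPolynomial (Fin n) ℝ) :=
  ⋂₀ { I | IsJetIdeal m I ∧ s ⊆ I }

/-- The finite set of multi-indices of order ≤ k. -/
def multiIdxLe (n k : ℕ) : Finset (Fin n → ℕ) :=
  (Fintype.piFinset fun _ => Finset.range (k + 1)).filter fun γ => (∑ i, γ i) ≤ k

/-- The degree m−|α| Taylor sum `Σ_{|γ| ≤ m−|α|} (1/γ!) ∂^{α+γ}F(w) (v−w)^γ`. -/
def taylorSum {n : ℕ} (m : ℕ) (F : En n → ℝ) (α : Fin n → ℕ) (w v : En n) : ℝ :=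
  ∑ γ ∈ multiIdxLe n (m - mIdeg α),
    ((∏ i, Nat.factorial (γ i) : ℕ) : ℝ)⁻¹ * pdMulti (fun i => α i + γ i) F w *
      ∏ i, (v i - w i) ^ γ i

/-- `F` is m-negligible for `Ω` (on the open set `U`). -/
def NegligibleFor {n : ℕ} (m : ℕ) (U Ω : Set (En n)) (F : En n → ℝ) : Prop :=
  ∀ ε > 0, ∃ δ > 0, ∃ r > 0,
    coneS Ω δ r ⊆ U ∧
    (∀ x ∈ coneS Ω δ r, ∀ α : Fin n → ℕ, mIdeg α ≤ m →
      |pdMulti α F x| ≤ ε * ‖x‖ ^ (m - mIdeg α)) ∧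
    (∀ x ∈ coneS Ω δ r, ∀ y ∈ coneS Ω δ r, x ≠ y → ∀ α : Fin n → ℕ, mIdeg α ≤ m →
      |pdMulti α F x - taylorSum m F α y x| ≤ ε * ‖x - y‖ ^ (m - mIdeg α))

/-- `F` is Whitney-m-negligible for `Ω` (on the open set `U`). -/
def WhitneyNegligible {n : ℕ} (m : ℕ) (U Ω : Set (En n)) (F : En n → ℝ) : Prop :=
  ∀ ε > 0, ∃ δ > 0, ∃ r > 0, ∃ Fε : En n → ℝ,
    coneS Ω δ r ⊆ U ∧
    ContDiffOn ℝ (m : ℕ∞) Fε {x | x ≠ 0} ∧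
    (∀ x : En n, x ≠ 0 → ∀ α : Fin n → ℕ, mIdeg α ≤ m →
      |pdMulti α Fε x| ≤ ε * ‖x‖ ^ (m - mIdeg α)) ∧
    ∀ x ∈ coneS Ω δ r, Fε x = F x

/-- The dome `D(ω,δ)` of directions around `ω`. -/
def Dset {n : ℕ} (ω : En n) (δ : ℝ) : Set (En n) := { ω' | ‖ω'‖ = 1 ∧ ‖ω' - ω‖ < δ }

/-- The annulus `Ann_K(ρ)`. -/
def Ann {n : ℕ} (K ρ : ℝ) : Set (En n) := { x | ρ / K < ‖x‖ ∧ ‖x‖ < K * ρ }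

/-- `I` implies the jet `p`. -/
def JetImplies {n : ℕ} (m : ℕ) (I : Set (MvPolynomial (Fin n) ℝ))
    (p : MvPolynomial (Fin n) ℝ) : Prop :=
  ∃ A > 0, ∃ (L : ℕ) (Q : Fin L → MvPolynomial (Fin n) ℝ), (∀ l, Q l ∈ I) ∧
    ∀ ε > 0, ∃ δ > 0, ∃ r > 0, ∀ ρ : ℝ, 0 < ρ → ρ ≤ r →
      ∃ (F : En n → ℝ) (S : Fin L → En n → ℝ),
        ContDiffOn ℝ (m : ℕ∞) F (Ann (n := n) 4 ρ) ∧
        (∀ l, ContDiffOn ℝ (m : ℕ∞) (S l) (Ann (n := n) 4 ρ)) ∧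
        (∀ x ∈ Ann (n := n) 4 ρ, ∀ α : Fin n → ℕ, mIdeg α ≤ m →
          |pdMulti α F x| ≤ ε * ρ ^ (m - mIdeg α)) ∧
        (∀ l, ∀ x ∈ Ann (n := n) 4 ρ, ∀ α : Fin n → ℕ, mIdeg α ≤ m →
          |pdMulti α (S l) x| ≤ A / ρ ^ mIdeg α) ∧
        ∀ x ∈ Ann (n := n) 2 ρ, (∃ ω ∈ AllowSet m I, ‖(‖x‖⁻¹ • x) - ω‖ < δ) →
          evalP p x = F x + ∑ l, S l x * evalP (Q l) x

/-- The closure `cl(I)` of an ideal of jets: all jets in `P₀^m(ℝⁿ)` implied by `I`. -/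
def jetClosure {n : ℕ} (m : ℕ) (I : Set (MvPolynomial (Fin n) ℝ)) :
    Set (MvPolynomial (Fin n) ℝ) :=
  { p | p.totalDegree ≤ m ∧ p.coeff 0 = 0 ∧ JetImplies m I p }

/-- `I` strongly implies `p` in the direction `ω`. -/
def StronglyImpliesAt {n : ℕ} (m : ℕ) (I : Set (MvPolynomial (Fin n) ℝ)) (ω : En n)
    (p : MvPolynomial (Fin n) ℝ) : Prop :=
  ∃ δω > 0, ∃ rω > 0, ∃ (L : ℕ) (Q : Fin L → MvPolynomial (Fin n) ℝ),
    (∀ l, Q l ∈ I) ∧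
    ∃ (S : Fin L → En n → ℝ) (C : Fin L → ℝ) (F : En n → ℝ),
      ContDiffOn ℝ (m : ℕ∞) F (cone ω δω rω) ∧
      (∀ l, ContDiffOn ℝ (m : ℕ∞) (S l) (cone ω δω rω)) ∧
      NegligibleFor m (cone ω δω rω) (AllowSet m I ∩ Dset ω δω) F ∧
      (∀ l, 0 < C l ∧ ∀ x ∈ cone ω δω rω, ∀ α : Fin n → ℕ, mIdeg α ≤ m →
        |pdMulti α (S l) x| ≤ C l / ‖x‖ ^ mIdeg α) ∧
      ∀ x ∈ cone ω δω rω, evalP p x = (∑ l, S l x * evalP (Q l) x) + F x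


section AuxProof
open Asymptotics Filter

universe u in
lemma taylor_littleO :
    ∀ (m : ℕ) {E F : Type u} [NormedAddCommGroup E] [NormedSpace ℝ E]
      [NormedAddCommGroup F] [NormedSpace ℝ F] (G : E → F), ContDiff ℝ (m : ℕ∞) G →
      (∀ k ≤ m, iteratedFDeriv ℝ k G 0 = 0) →
      G =o[nhds (0 : E)] fun x => ‖x‖ ^ m := by
  intro m
  induction m with
  | zero =>
    intro E F _ _ _ _ G hG h0
    have hG0 : G 0 = 0 := by
      have h := h0 0 le_rfl
      have := congrFun (congrArg DFunLike.coe h) (fun _ : Fin 0 => (0 : E))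
      simpa [iteratedFDeriv_zero_apply] using this
    simp only [pow_zero]
    rw [isLittleO_one_iff]
    simpa [hG0] using (hG.continuous.tendsto 0)
  | succ m IH =>
    intro E F _ _ _ _ G hG h0
    have hG' : ContDiff ℝ ((m : ℕ∞) + 1) G := by exact_mod_cast hG
    rw [contDiff_succ_iff_fderiv] at hG'
    have hdiff : Differentiable ℝ G := hG'.1
    have hGd : ContDiff ℝ (m : ℕ∞) (fderiv ℝ G) := hG'.2.2
    have h0' : ∀ k ≤ m, iteratedFDeriv ℝ k (fderiv ℝ G) 0 = 0 := by
      intro k hk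
      have : ‖iteratedFDeriv ℝ k (fderiv ℝ G) 0‖ = 0 := by
        rw [norm_iteratedFDeriv_fderiv, h0 (k+1) (by omega), norm_zero]
      exact norm_eq_zero.mp this
    have hIH := IH (fderiv ℝ G) hGd h0'
    have hG0 : G 0 = 0 := by
      have h := h0 0 (by omega)
      have := congrFun (congrArg DFunLike.coe h) (fun _ : Fin 0 => (0 : E))
      simpa [iteratedFDeriv_zero_apply] using this
    rw [isLittleO_iff]
    intro ε hε
    have hev := (isLittleO_iff.mp hIH) hε
    rw [Metric.eventually_nhds_iff] at hev ⊢
    obtain ⟨r, hr, hb⟩ := hev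
    refine ⟨r, hr, fun {x} hx => ?_⟩
    have hxr : ‖x‖ < r := by simpa [dist_zero_right] using hx
    have hmv : ‖G x - G 0‖ ≤ (ε * ‖x‖ ^ m) * ‖x - 0‖ := by
      refine (convex_closedBall (0:E) ‖x‖).norm_image_sub_le_of_norm_fderiv_le
        (fun y _ => hdiff y) (fun y hy => ?_) (Metric.mem_closedBall_self (norm_nonneg x)) ?_
      · have hyx : ‖y‖ ≤ ‖x‖ := by simpa [dist_zero_right] using hy
        have h1 : ‖fderiv ℝ G y‖ ≤ ε * ‖‖y‖ ^ m‖ := by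
          apply hb; simp only [dist_zero_right]; exact lt_of_le_of_lt hyx hxr
        have h2 : ‖‖y‖ ^ m‖ ≤ ‖x‖ ^ m := by
          rw [Real.norm_eq_abs, abs_of_nonneg (pow_nonneg (norm_nonneg y) m)]
          exact pow_le_pow_left₀ (norm_nonneg y) hyx m
        calc ‖fderiv ℝ G y‖ ≤ ε * ‖‖y‖ ^ m‖ := h1
          _ ≤ ε * ‖x‖ ^ m := by nlinarith [norm_nonneg (‖y‖ ^ m)]
      · simp [dist_zero_right]
    rw [hG0, sub_zero, sub_zero] at hmv
    calc ‖G x‖ ≤ ε * ‖x‖ ^ m * ‖x‖ := hmv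
      _ = ε * ‖x‖ ^ (m + 1) := by ring
      _ ≤ ε * ‖‖x‖ ^ (m+1)‖ := by
          rw [Real.norm_eq_abs, abs_of_nonneg (pow_nonneg (norm_nonneg x) _)]

lemma contDiff_evalP {n : ℕ} (p : MvPolynomial (Fin n) ℝ) :
    ContDiff ℝ (⊤ : ℕ∞) (evalP p) := by
  unfold evalP
  induction p using MvPolynomial.induction_on with
  | C a => simpa using contDiff_const (c := a)
  | add p q hp hq => simpa [map_add] using hp.add hq
  | mul_X p i hp =>
    simp only [map_mul, MvPolynomial.eval_X]
    exact hp.mul (EuclideanSpace.proj (𝕜 := ℝ) i).contDiff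

lemma tangent_allowed {n m : ℕ} {E : Set (En n)} {ω : En n}
    (ht : Tangent E ω) : Allowed m (Im m E) ω := by
  rintro ⟨L, p, hp, c, hc, δ, hδ, r, hr, hbound⟩
  choose F hF hFE hJet using fun l => (hp l)
  have hlo : (fun x => ∑ l, |F l x - evalP (p l) x|) =o[nhds (0 : En n)]
      fun x => ‖x‖ ^ m := by
    apply Asymptotics.IsLittleO.fun_sum
    intro l _
    exact (taylor_littleO m (fun x => F l x - evalP (p l) x)
      ((hF l).sub ((contDiff_evalP (p l)).of_le (by exact_mod_cast (le_top : (m:ℕ∞) ≤ ⊤)))) (hJet l).2).abs_left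
  have hev := (Asymptotics.isLittleO_iff.mp hlo) (show (0:ℝ) < c/2 by positivity)
  rw [Metric.eventually_nhds_iff] at hev
  obtain ⟨r', hr', hball⟩ := hev
  obtain ⟨x, hxE, hxc⟩ := ht δ hδ (min r r') (lt_min hr hr')
  obtain ⟨hx0, hxlt, hxd⟩ := hxc
  have hx1 : x ∈ cone ω δ r := ⟨hx0, lt_of_lt_of_le hxlt (min_le_left _ _), hxd⟩
  have h1 := hbound x hx1
  have h2 : ∑ l, |evalP (p l) x| = ∑ l, |F l x - evalP (p l) x| := by
    refine Finset.sum_congr rfl fun l _ => ?_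
    rw [hFE l x hxE, zero_sub, abs_neg]
  have h3 : ‖∑ l, |F l x - evalP (p l) x|‖ ≤ c/2 * ‖‖x‖ ^ m‖ := by
    apply hball
    simp only [dist_zero_right]
    exact lt_of_lt_of_le hxlt (min_le_right _ _)
  rw [Real.norm_eq_abs, abs_of_nonneg (Finset.sum_nonneg fun l _ => abs_nonneg _),
    Real.norm_eq_abs, abs_of_nonneg (pow_nonneg (norm_nonneg x) m)] at h3
  have hpow : (0:ℝ) < ‖x‖ ^ m := pow_pos hx0 m
  rw [h2] at h1
  nlinarith

end AuxProof

/-- near the origin, `E` is contained in any conic neighborhood of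
`Ω = Allow(I^m(E))`; and if `Ω = ∅` then the origin is isolated in `E`. -/
theorem E_near_allowed_directions {n m : ℕ} (E : Set (En n)) (hE : IsClosed E)
    (h0 : (0 : En n) ∈ E) :
    ∀ δ > 0, ∃ rbar > 0,
      ((AllowSet m (Im m E)).Nonempty →
        ∀ x ∈ E, x ≠ 0 → ‖x‖ < rbar →
          ∃ ω ∈ AllowSet m (Im m E), ‖(‖x‖⁻¹ • x) - ω‖ < δ) ∧
      (AllowSet m (Im m E) = ∅ → E ∩ Metric.ball (0 : En n) rbar = {0}) := by
  intro δ hδ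
  have key : ∃ rbar > 0, ∀ x ∈ E, x ≠ 0 → ‖x‖ < rbar →
      ∃ ω ∈ AllowSet m (Im m E), ‖(‖x‖⁻¹ • x) - ω‖ < δ := by
    by_contra hcon
    push_neg at hcon
    have hseq : ∀ k : ℕ, ∃ x ∈ E, x ≠ 0 ∧ ‖x‖ < 1 / (k + 1 : ℝ) ∧
        ∀ ω ∈ AllowSet m (Im m E), δ ≤ ‖(‖x‖⁻¹ • x) - ω‖ := by
      intro k
      obtain ⟨x, hxE, hx0, hxlt, hfar⟩ := hcon (1 / (k + 1 : ℝ)) (by positivity)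
      exact ⟨x, hxE, hx0, hxlt, hfar⟩
    choose x hxE hx0 hxlt hfar using hseq
    set u : ℕ → En n := fun k => ‖x k‖⁻¹ • x k with hu
    have hnorm : ∀ k, ‖u k‖ = 1 := by
      intro k
      have h : ‖x k‖ ≠ 0 := norm_ne_zero_iff.mpr (hx0 k)
      simp [hu, norm_smul, abs_of_nonneg (inv_nonneg.mpr (norm_nonneg (x k))),
        inv_mul_cancel₀ h]
    have husp : ∀ k, u k ∈ Metric.sphere (0 : En n) 1 := fun k =>
      mem_sphere_zero_iff_norm.mpr (hnorm k)
    obtain ⟨ω, hωs, φ, hφ, hlim⟩ :=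
      (isCompact_sphere (0 : En n) 1).tendsto_subseq husp
    have htan : Tangent E ω := by
      intro δ' hδ' r' hr'
      obtain ⟨k₀, hk₀⟩ := exists_nat_one_div_lt hr'
      have hev : ∀ᶠ k in Filter.atTop, dist (u (φ k)) ω < δ' :=
        hlim.eventually (Metric.ball_mem_nhds ω hδ')
      obtain ⟨N, hN⟩ := hev.exists_forall_of_atTop
      set k := max N k₀
      have hd : dist (u (φ k)) ω < δ' := hN k (le_max_left _ _)
      have hsmall : ‖x (φ k)‖ < r' := by
        have h1 : ‖x (φ k)‖ < 1 / (φ k + 1 : ℝ) := hxlt (φ k)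
        have h2 : (1 : ℝ) / (φ k + 1) ≤ 1 / (k₀ + 1) := by
          apply one_div_le_one_div_of_le (by positivity)
          have : (k₀ : ℝ) ≤ φ k := by
            exact_mod_cast le_trans (le_max_right N k₀) (le_trans hφ.le_apply le_rfl)
          linarith
        linarith
      refine ⟨x (φ k), hxE (φ k), norm_pos_iff.mpr (hx0 (φ k)), hsmall,
        ω, Set.mem_singleton ω, ?_⟩
      rw [← dist_eq_norm]
      exact hd
    have hωA : ω ∈ AllowSet m (Im m E) :=
      ⟨mem_sphere_zero_iff_norm.mp hωs, tangent_allowed htan⟩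
    have hcontra : ∀ k, δ ≤ dist (u (φ k)) ω := by
      intro k
      rw [dist_eq_norm]
      exact hfar (φ k) ω hωA
    have hev : ∀ᶠ k in Filter.atTop, dist (u (φ k)) ω < δ :=
      hlim.eventually (Metric.ball_mem_nhds ω hδ)
    obtain ⟨k, hk⟩ := hev.exists
    exact absurd (hcontra k) (not_le.mpr hk)
  obtain ⟨rbar, hrbar, hkey⟩ := key
  refine ⟨rbar, hrbar, fun _ x hxE hx0 hxlt => hkey x hxE hx0 hxlt, fun hempty => ?_⟩
  ext y
  simp only [Set.mem_inter_iff, Metric.mem_ball, Set.mem_singleton_iff]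
  constructor
  · rintro ⟨hyE, hyb⟩
    by_contra hy0
    obtain ⟨ω, hω, -⟩ := hkey y hyE hy0 (by rwa [← dist_zero_right])
    rw [hempty] at hω
    exact hω
  · rintro rfl
    exact ⟨h0, by simpa using hrbar⟩
end
end

section
/- Let I = ⟨p₁,…,p_t⟩_m be an ideal of P₀^m(ℝⁿ) generated by nonzero jets p₁,…,p_t. Then Allow(I) is contained in the intersection over i of the zero sets in S^{n−1} of the lowest degree homogeneous parts of the p_i. -/
open scoped BigOperators
open MvPolynomial

noncomputable section

/-- Coordinate bound in Euclidean space. -/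
lemma abs_coord_le_norm {n : ℕ} (x : En n) (i : Fin n) : |x i| ≤ ‖x‖ := by
  have h2 : ‖x i‖ ^ 2 ≤ ∑ j, ‖x j‖ ^ 2 :=
    Finset.single_le_sum (f := fun j => ‖x j‖ ^ 2) (fun j _ => sq_nonneg _) (Finset.mem_univ i)
  have h : ‖x i‖ ≤ ‖x‖ := by
    rw [EuclideanSpace.norm_eq x]
    calc ‖x i‖ = Real.sqrt (‖x i‖ ^ 2) := (Real.sqrt_sq (norm_nonneg _)).symm
      _ ≤ _ := Real.sqrt_le_sqrt h2
  simpa using h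

/-- Evaluation is continuous. -/
lemma evalP_continuous {n : ℕ} (P : MvPolynomial (Fin n) ℝ) :
    Continuous (fun x : En n => evalP P x) := by
  have : (fun x : En n => evalP P x)
      = fun x : En n => ∑ d ∈ P.support, P.coeff d * ∏ i, (x i) ^ d i := by
    funext x; exact MvPolynomial.eval_eq' _ _
  rw [this]
  refine continuous_finset_sum _ fun d _ => Continuous.mul continuous_const ?_
  refine continuous_finset_prod _ fun i _ => Continuous.pow ?_ _
  exact (continuous_apply i).comp (PiLp.continuous_ofLp 2 (fun _ : Fin n => ℝ))

lemma sum_univ_eq_degree {n : ℕ} (d : Fin n →₀ ℕ) :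
    ∑ i, d i = ∑ i ∈ d.support, d i := by
  refine (Finset.sum_subset (Finset.subset_univ _) ?_).symm
  intro i _ hi
  exact Finsupp.notMem_support_iff.mp hi

/-- Homogeneous polynomials scale under evaluation. -/
lemma evalP_hom_smul {n k : ℕ} {P : MvPolynomial (Fin n) ℝ} (h : P.IsHomogeneous k)
    (s : ℝ) (x : En n) : evalP P (s • x) = s ^ k * evalP P x := by
  unfold evalP
  have hsx : (fun i => (s • x) i) = fun i => s * x i := by
    funext i; rfl
  rw [hsx, MvPolynomial.eval_eq', MvPolynomial.eval_eq', Finset.mul_sum]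
  refine Finset.sum_congr rfl fun d hd => ?_
  have hco : P.coeff d ≠ 0 := MvPolynomial.mem_support_iff.mp hd
  have hw := h hco
  have hdeg : ∑ i, d i = k := by
    rw [sum_univ_eq_degree]
    have : d.degree = k := by rw [Finsupp.degree_eq_weight_one]; exact_mod_cast hw
    simpa [Finsupp.degree_apply] using this
  calc P.coeff d * ∏ i, (s * x i) ^ d i
      = P.coeff d * ((∏ i, s ^ d i) * ∏ i, (x i) ^ d i) := by
        rw [← Finset.prod_mul_distrib]; simp [mul_pow]
    _ = s ^ k * (P.coeff d * ∏ i, (x i) ^ d i) := by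
        rw [Finset.prod_pow_eq_pow_sum, hdeg]; ring

/-- Bound for polynomials with vanishing low-order coefficients. -/
lemma evalP_high_bound {n K : ℕ} {P : MvPolynomial (Fin n) ℝ}
    (h : ∀ d : (Fin n) →₀ ℕ, (d.sum fun _ e => e) ≤ K → P.coeff d = 0)
    (x : En n) (hx : ‖x‖ ≤ 1) :
    |evalP P x| ≤ (∑ d ∈ P.support, |P.coeff d|) * ‖x‖ ^ (K + 1) := by
  have hx0 : (0:ℝ) ≤ ‖x‖ := norm_nonneg x
  unfold evalP
  rw [MvPolynomial.eval_eq']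
  calc |∑ d ∈ P.support, P.coeff d * ∏ i, (x i) ^ d i|
      ≤ ∑ d ∈ P.support, |P.coeff d * ∏ i, (x i) ^ d i| := Finset.abs_sum_le_sum_abs _ _
    _ ≤ ∑ d ∈ P.support, |P.coeff d| * ‖x‖ ^ (K + 1) := by
        refine Finset.sum_le_sum fun d hd => ?_
        rw [abs_mul]
        refine mul_le_mul_of_nonneg_left ?_ (abs_nonneg _)
        have hdd : K + 1 ≤ ∑ i, d i := by
          by_contra hc
          push_neg at hc
          have : (d.sum fun _ e => e) ≤ K := by
            have : (d.sum fun _ e => e) = ∑ i, d i := by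
              rw [sum_univ_eq_degree]; rfl
            omega
          exact MvPolynomial.mem_support_iff.mp hd (h d this)
        calc |∏ i, (x i) ^ d i| ≤ ∏ i, ‖x‖ ^ d i := by
              rw [Finset.abs_prod]
              refine Finset.prod_le_prod (fun i _ => abs_nonneg _) fun i _ => ?_
              simp only [abs_pow]
              exact pow_le_pow_left₀ (abs_nonneg _) (abs_coord_le_norm x i) _
          _ = ‖x‖ ^ (∑ i, d i) := Finset.prod_pow_eq_pow_sum _ _ _
          _ ≤ ‖x‖ ^ (K + 1) := pow_le_pow_of_le_one hx0 hx hdd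
    _ = (∑ d ∈ P.support, |P.coeff d|) * ‖x‖ ^ (K + 1) := by
        rw [Finset.sum_mul]

/-- `Allow(⟨p₁,…,p_t⟩_m)` is contained in the intersection of the zero sets on
the sphere of the lowest degree homogeneous parts of the generators. -/
theorem allowed_subset_zero_of_lowest_parts {n m t : ℕ}
    (p pk q : Fin t → MvPolynomial (Fin n) ℝ) (k : Fin t → ℕ)
    (hk1 : ∀ i, 1 ≤ k i) (hkm : ∀ i, k i ≤ m) (hdeg : ∀ i, (p i).totalDegree ≤ m)
    (hp : ∀ i, p i ≠ 0)
    (hhom : ∀ i, (pk i).IsHomogeneous (k i)) (hpk : ∀ i, pk i ≠ 0)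
    (hsplit : ∀ i, p i = pk i + q i)
    (hq : ∀ i, ∀ d : (Fin n) →₀ ℕ, (d.sum fun _ e => e) ≤ k i → (q i).coeff d = 0)
    (ω : En n) (hω : ‖ω‖ = 1)
    (hallow : Allowed m (jetSpan m (Set.range p)) ω) :
    ∀ i, evalP (pk i) ω = 0 := by
  intro i
  by_contra hne
  apply hallow
  -- p i belongs to the generated ideal
  have hmem : p i ∈ jetSpan m (Set.range p) := by
    intro I hI
    exact hI.2 ⟨i, rfl⟩
  set c0 : ℝ := |evalP (pk i) ω| with hc0def
  have hc0 : 0 < c0 := abs_pos.mpr hne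
  -- continuity of evalP (pk i) at ω
  have hcont := (evalP_continuous (pk i)).continuousAt (x := ω)
  rw [Metric.continuousAt_iff] at hcont
  obtain ⟨δ, hδ, hδprop⟩ := hcont (c0 / 2) (by positivity)
  set C : ℝ := ∑ d ∈ (q i).support, |(q i).coeff d| with hCdef
  have hC0 : 0 ≤ C := Finset.sum_nonneg fun d _ => abs_nonneg _
  set r : ℝ := min 1 (c0 / (4 * (C + 1))) with hrdef
  have hr : 0 < r := lt_min one_pos (by positivity)
  refine ⟨1, fun _ => p i, fun _ => hmem, c0 / 8, by positivity, δ, hδ, r, hr, ?_⟩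
  intro x hx
  obtain ⟨hx0, hxr, ω'', hω''mem, hclose⟩ := hx
  rw [Set.mem_singleton_iff] at hω''mem
  rw [hω''mem] at hclose
  set s : ℝ := ‖x‖ with hsdef
  set ω' : En n := s⁻¹ • x with hω'def
  have hs0 : 0 < s := hx0
  have hxsm : x = s • ω' := by
    rw [hω'def, smul_smul, mul_inv_cancel₀ (ne_of_gt hs0), one_smul]
  -- lower bound for the homogeneous part at ω'
  have hω'cl : dist ω' ω < δ := by
    rw [dist_eq_norm]; exact hclose
  have hlow : c0 / 2 < |evalP (pk i) ω'| := by
    have := hδprop hω'cl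
    rw [dist_eq_norm] at this
    have h1 : |evalP (pk i) ω| - |evalP (pk i) ω'| ≤ |evalP (pk i) ω' - evalP (pk i) ω| := by
      rw [abs_sub_comm]; exact abs_sub_abs_le_abs_sub _ _
    rw [Real.norm_eq_abs] at this
    linarith
  have hω'n : ‖ω'‖ = 1 := by
    rw [hω'def, norm_smul, norm_inv, Real.norm_eq_abs, abs_of_pos hs0, ← hsdef,
      inv_mul_cancel₀ (ne_of_gt hs0)]
  -- evaluate
  have hpkx : evalP (pk i) x = s ^ (k i) * evalP (pk i) ω' := by
    rw [hxsm]; exact evalP_hom_smul (hhom i) s ω'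
  have hsx1 : s ≤ 1 := le_of_lt (lt_of_lt_of_le hxr (min_le_left _ _))
  have hqx : |evalP (q i) x| ≤ C * s ^ (k i + 1) :=
    evalP_high_bound (hq i) x hsx1
  have hpx : evalP (p i) x = evalP (pk i) x + evalP (q i) x := by
    unfold evalP
    rw [hsplit i, map_add]
  -- main estimate
  have hsk : 0 < s ^ (k i) := pow_pos hs0 _
  have hCs : C * s < c0 / 4 := by
    have hsr : s < c0 / (4 * (C + 1)) := lt_of_lt_of_le hxr (min_le_right _ _)
    have h1 : C * s ≤ (C + 1) * s := by nlinarith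
    have h2 : (C + 1) * s < (C + 1) * (c0 / (4 * (C + 1))) := by
      apply mul_lt_mul_of_pos_left hsr (by positivity)
    have h3 : (C + 1) * (c0 / (4 * (C + 1))) = c0 / 4 := by
      field_simp
    linarith
  have hbig : s ^ (k i) * (c0 / 4) < |evalP (p i) x| := by
    have h1 : s ^ (k i) * (c0 / 2) < |evalP (pk i) x| := by
      rw [hpkx, abs_mul, abs_of_pos hsk]
      exact mul_lt_mul_of_pos_left hlow hsk
    have h2 : |evalP (pk i) x| - |evalP (q i) x| ≤ |evalP (p i) x| := by
      have h3 := abs_sub_abs_le_abs_sub (evalP (pk i) x) (-(evalP (q i) x))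
      simp only [abs_neg, sub_neg_eq_add] at h3
      rw [hpx]
      linarith
    have h4 : C * s ^ (k i + 1) = s ^ (k i) * (C * s) := by ring
    nlinarith [mul_pos hsk (show (0:ℝ) < c0 / 4 - C * s by linarith)]
  have hsm : s ^ m ≤ s ^ (k i) :=
    pow_le_pow_of_le_one (le_of_lt hs0) hsx1 (hkm i)
  calc c0 / 8 * ‖x‖ ^ m = s ^ m * (c0 / 8) := by rw [← hsdef]; ring
    _ ≤ s ^ (k i) * (c0 / 8) := by
        apply mul_le_mul_of_nonneg_right hsm (by positivity)
    _ < s ^ (k i) * (c0 / 4) := by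
        apply mul_lt_mul_of_pos_left (by linarith) hsk
    _ < |evalP (p i) x| := hbig
    _ = ∑ _l : Fin 1, |evalP (p i) x| := by simp
end
end

section
/- In P₀²(ℝ³) with coordinates (x,y,z), for every conic neighborhood of the z-axis there is a constant c > 0 such that |x²| + |y² − xz| > c·(x² + y² + z²) for all (x,y,z) outside that conic neighborhood. Consequently, for the ideal I generated by x² and y² − xz, Allow(I) ⊆ {(0,0,1), (0,0,−1)}. -/
open scoped BigOperators
open MvPolynomial

noncomputable section

lemma key_ineq : ∀ δ > 0, ∃ c > 0, ∀ v : En 3, v ≠ 0 →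
      δ ≤ ‖(‖v‖⁻¹ • v) - EuclideanSpace.single (2 : Fin 3) (1 : ℝ)‖ →
      δ ≤ ‖(‖v‖⁻¹ • v) + EuclideanSpace.single (2 : Fin 3) (1 : ℝ)‖ →
      c * ‖v‖ ^ 2 < |(v 0) ^ 2| + |(v 1) ^ 2 - v 0 * v 2| := by
  intro δ hδ
  set e3 : En 3 := EuclideanSpace.single (2 : Fin 3) (1 : ℝ) with he3
  set f : En 3 → ℝ := fun u => |(u 0 : ℝ) ^ 2| + |(u 1) ^ 2 - u 0 * u 2| with hf
  have hfc : Continuous f := by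
    apply Continuous.add
    · exact (((EuclideanSpace.proj (0 : Fin 3)).continuous).pow 2).abs
    · exact ((((EuclideanSpace.proj (1 : Fin 3)).continuous).pow 2).sub
        (((EuclideanSpace.proj (0 : Fin 3)).continuous).mul
          ((EuclideanSpace.proj (2 : Fin 3)).continuous))).abs
  set K : Set (En 3) := Metric.sphere 0 1 ∩ {u | δ ≤ ‖u - e3‖ ∧ δ ≤ ‖u + e3‖} with hK
  have hKc : IsCompact K := by
    apply (isCompact_sphere (0 : En 3) 1).inter_right
    apply IsClosed.inter
    · exact isClosed_le continuous_const ((continuous_id.sub continuous_const).norm)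
    · exact isClosed_le continuous_const ((continuous_id.add continuous_const).norm)
  -- membership of the normalized vector
  have hmem : ∀ v : En 3, v ≠ 0 →
      δ ≤ ‖(‖v‖⁻¹ • v) - e3‖ → δ ≤ ‖(‖v‖⁻¹ • v) + e3‖ → (‖v‖⁻¹ • v) ∈ K := by
    intro v hv h1 h2
    refine ⟨?_, h1, h2⟩
    simp only [mem_sphere_iff_norm, sub_zero, norm_smul, norm_inv, norm_norm]
    exact inv_mul_cancel₀ (norm_ne_zero_iff.mpr hv)
  -- homogeneity: f v = ‖v‖^2 * f (‖v‖⁻¹ • v)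
  have hhom : ∀ v : En 3, v ≠ 0 → f v = ‖v‖ ^ 2 * f (‖v‖⁻¹ • v) := by
    intro v hv
    have ht : (0:ℝ) < ‖v‖ := norm_pos_iff.mpr hv
    have h0 : (‖v‖⁻¹ • v) 0 = ‖v‖⁻¹ * v 0 := by simp
    have h1 : (‖v‖⁻¹ • v) 1 = ‖v‖⁻¹ * v 1 := by simp
    have h2 : (‖v‖⁻¹ • v) 2 = ‖v‖⁻¹ * v 2 := by simp
    simp only [hf, h0, h1, h2]
    have e1 : (‖v‖⁻¹ * v 1) ^ 2 - (‖v‖⁻¹ * v 0) * (‖v‖⁻¹ * v 2)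
        = (‖v‖⁻¹)^2 * ((v 1)^2 - v 0 * v 2) := by ring
    have e0 : (‖v‖⁻¹ * v 0) ^ 2 = (‖v‖⁻¹)^2 * (v 0)^2 := by ring
    rw [e0, e1, abs_mul, abs_mul]
    have : |(‖v‖⁻¹)^2| = (‖v‖⁻¹)^2 := abs_of_nonneg (by positivity)
    rw [this]
    field_simp
  rcases K.eq_empty_or_nonempty with hKe | hKne
  · refine ⟨1, one_pos, fun v hv h1 h2 => ?_⟩
    exact absurd (hmem v hv h1 h2) (by simp [hKe])
  · obtain ⟨u₀, hu₀K, hu₀min'⟩ := hKc.exists_isMinOn hKne hfc.continuousOn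
    have hu₀min : ∀ y ∈ K, f u₀ ≤ f y := fun y hy => hu₀min' hy
    have hc₀ : 0 < f u₀ := by
      rcases lt_or_eq_of_le (by positivity : (0:ℝ) ≤ f u₀) with h | h
      · exact h
      exfalso
      simp only [hf] at h
      have ha : |(u₀ 0 : ℝ) ^ 2| = 0 ∧ |(u₀ 1) ^ 2 - u₀ 0 * u₀ 2| = 0 := by
        constructor <;>
          linarith [abs_nonneg ((u₀ 0 : ℝ)^2), abs_nonneg ((u₀ 1)^2 - u₀ 0 * u₀ 2)]
      have h00 : u₀ 0 = 0 := by
        have := abs_eq_zero.mp ha.1; exact pow_eq_zero_iff (n := 2) (by norm_num) |>.mp this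
      have h10 : u₀ 1 = 0 := by
        have := abs_eq_zero.mp ha.2
        have : (u₀ 1)^2 = 0 := by rw [h00] at this; linarith [sub_eq_zero.mp this]
        exact pow_eq_zero_iff (n := 2) (by norm_num) |>.mp this
      have hnorm : ‖u₀‖ = 1 := by
        have := hu₀K.1; simpa [mem_sphere_iff_norm] using this
      have hsum : (u₀ 0)^2 + (u₀ 1)^2 + (u₀ 2)^2 = 1 := by
        have h := EuclideanSpace.norm_eq u₀
        rw [hnorm] at h
        have h' : Real.sqrt (∑ i, ‖u₀ i‖ ^ 2) = 1 := h.symm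
        have : (∑ i : Fin 3, ‖u₀ i‖ ^ 2) = 1 := by
          have hnn : (0:ℝ) ≤ ∑ i : Fin 3, ‖u₀ i‖ ^ 2 := by positivity
          nlinarith [Real.sq_sqrt hnn]
        simpa [Fin.sum_univ_three, sq_abs] using this
      have h22 : (u₀ 2)^2 = 1 := by rw [h00, h10] at hsum; linarith
      have hcase : u₀ 2 = 1 ∨ u₀ 2 = -1 := by
        rcases mul_eq_zero.mp (show (u₀ 2 - 1) * (u₀ 2 + 1) = 0 by nlinarith) with h | h
        · left; linarith
        · right; linarith
      rcases hcase with h2v | h2v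
      · have hz : ‖u₀ - e3‖ = 0 := by
          rw [EuclideanSpace.norm_eq]
          simp [Fin.sum_univ_three, he3, EuclideanSpace.single_apply, h00, h10, h2v]
        have h' := hu₀K.2.1
        rw [hz] at h'
        linarith
      · have hz : ‖u₀ + e3‖ = 0 := by
          rw [EuclideanSpace.norm_eq]
          simp [Fin.sum_univ_three, he3, EuclideanSpace.single_apply, h00, h10, h2v]
        have h' := hu₀K.2.2
        rw [hz] at h'
        linarith
    refine ⟨f u₀ / 2, by positivity, fun v hv h1 h2 => ?_⟩
    have ht : (0:ℝ) < ‖v‖ := norm_pos_iff.mpr hv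
    have hle : f u₀ ≤ f (‖v‖⁻¹ • v) := hu₀min _ (hmem v hv h1 h2)
    have := hhom v hv
    have hfv : f u₀ * ‖v‖^2 ≤ f v := by
      rw [this]; nlinarith [sq_nonneg ‖v‖]
    have ht2 : (0:ℝ) < ‖v‖ ^ 2 := by positivity
    have : f u₀ / 2 * ‖v‖ ^ 2 < f u₀ * ‖v‖ ^ 2 := by nlinarith [mul_pos (half_pos hc₀) ht2]
    calc f u₀ / 2 * ‖v‖ ^ 2 < f u₀ * ‖v‖^2 := this
      _ ≤ f v := hfv

/-- outside any conic neighborhood of the z-axis,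
`|x²| + |y² − xz| > c(x²+y²+z²)`; consequently `Allow(⟨x², y²−xz⟩₂) ⊆ {±e₃}`. -/
theorem x2_y2xz_allowed_in_z_axis :
    (∀ δ > 0, ∃ c > 0, ∀ v : En 3, v ≠ 0 →
      δ ≤ ‖(‖v‖⁻¹ • v) - EuclideanSpace.single (2 : Fin 3) (1 : ℝ)‖ →
      δ ≤ ‖(‖v‖⁻¹ • v) + EuclideanSpace.single (2 : Fin 3) (1 : ℝ)‖ →
      c * ‖v‖ ^ 2 < |(v 0) ^ 2| + |(v 1) ^ 2 - v 0 * v 2|) ∧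
    ∀ ω : En 3, ‖ω‖ = 1 →
      Allowed 2 (jetSpan 2
        ({(X 0 : MvPolynomial (Fin 3) ℝ) ^ 2, (X 1 : MvPolynomial (Fin 3) ℝ) ^ 2 - X 0 * X 2}))
        ω →
      ω = EuclideanSpace.single (2 : Fin 3) (1 : ℝ) ∨
        ω = -EuclideanSpace.single (2 : Fin 3) (1 : ℝ) := by
  refine ⟨key_ineq, ?_⟩
  intro ω hω hAllow
  by_contra hne
  push_neg at hne
  obtain ⟨hne1, hne2⟩ := hne
  apply hAllow
  set e3 : En 3 := EuclideanSpace.single (2 : Fin 3) (1 : ℝ) with he3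
  have hd1 : 0 < ‖ω - e3‖ := by rw [norm_pos_iff]; exact sub_ne_zero.mpr hne1
  have hd2 : 0 < ‖ω + e3‖ := by
    rw [norm_pos_iff]
    intro h
    exact hne2 (eq_neg_of_add_eq_zero_left h)
  set δ₁ : ℝ := min ‖ω - e3‖ ‖ω + e3‖ / 2 with hδ₁
  have hδ₁pos : 0 < δ₁ := by
    have := lt_min hd1 hd2
    positivity
  obtain ⟨c, hc, hmain⟩ := key_ineq δ₁ hδ₁pos
  refine ⟨2, ![X 0 ^ 2, X 1 ^ 2 - X 0 * X 2], ?_, c, hc, δ₁, hδ₁pos, 1, one_pos, ?_⟩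
  · intro l
    apply Set.mem_sInter.mpr
    intro J hJ
    apply hJ.2
    fin_cases l <;> simp [Set.mem_insert_iff]
  · intro x hx
    simp only [cone, coneS, Set.mem_setOf_eq] at hx
    obtain ⟨hx0, hxr, ω', hω', hxd⟩ := hx
    rw [Set.mem_singleton_iff] at hω'
    rw [hω'] at hxd
    have hxne : x ≠ 0 := norm_pos_iff.mp hx0
    have hmin1 : min ‖ω - e3‖ ‖ω + e3‖ ≤ ‖ω - e3‖ := min_le_left _ _
    have hmin2 : min ‖ω - e3‖ ‖ω + e3‖ ≤ ‖ω + e3‖ := min_le_right _ _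
    have ht1 : δ₁ ≤ ‖(‖x‖⁻¹ • x) - e3‖ := by
      have htri := dist_triangle ω (‖x‖⁻¹ • x) e3
      rw [dist_eq_norm, dist_eq_norm, dist_eq_norm] at htri
      have : ‖ω - ‖x‖⁻¹ • x‖ < δ₁ := by
        rw [norm_sub_rev]; exact hxd
      linarith
    have ht2 : δ₁ ≤ ‖(‖x‖⁻¹ • x) + e3‖ := by
      have htri := dist_triangle ω (‖x‖⁻¹ • x) (-e3)
      rw [dist_eq_norm, dist_eq_norm, dist_eq_norm, sub_neg_eq_add, sub_neg_eq_add] at htri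
      have : ‖ω - ‖x‖⁻¹ • x‖ < δ₁ := by
        rw [norm_sub_rev]; exact hxd
      linarith
    have hkey := hmain x hxne ht1 ht2
    have hev : (∑ l : Fin 2, |evalP ((![X 0 ^ 2, X 1 ^ 2 - X 0 * X 2] :
          Fin 2 → MvPolynomial (Fin 3) ℝ) l) x|)
        = |(x 0) ^ 2| + |(x 1) ^ 2 - x 0 * x 2| := by
      rw [Fin.sum_univ_two]
      simp [evalP]
    rw [hev]
    exact hkey
end
end

section
/- Let m = 2, n = 3, Ω = {(0,0,1)} ⊂ S², and F(x,y,z) = y³/z defined on U = ℝ³ \ {z = 0}. Then F is 2-negligible for Ω: for every ε ∈ (0,1) there exist δ, r > 0 (one may take δ = 10^{−100}·ε^{10}, r = 1) such that the cone Γ(Ω,δ,r) ⊂ U, |∂^α F(v)| ≤ ε·|v|^{2−|α|} for all v ∈ Γ(Ω,δ,r) and all multi-indices |α| ≤ 2, and the first-order Taylor remainder estimates |∂^α F(v) − Σ_{|γ| ≤ 2−|α|} (1/γ!) ∂^{α+γ}F(w)·(v−w)^γ| ≤ ε·|v−w|^{2−|α|} hold for all distinct v, w ∈ Γ(Ω,δ,r).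 -/
open scoped BigOperators
open MvPolynomial

noncomputable section

def Mdl (c : ℝ) (p q : ℕ) : En 3 → ℝ := fun v => c * (v 1) ^ p / (v 2) ^ q

def prj (i : Fin 3) : En 3 →L[ℝ] ℝ := EuclideanSpace.proj i

def MdlD (c : ℝ) (p q : ℕ) (v : En 3) : En 3 →L[ℝ] ℝ :=
  (Mdl (c * p) (p - 1) q v) • prj 1 + (Mdl (-(c * q)) p (q + 1) v) • prj 2

lemma isOpen_U : IsOpen {x : En 3 | x 2 ≠ 0} :=
  isOpen_ne.preimage (prj 2).continuous

lemma hasFDerivAt_Mdl (c : ℝ) (p q : ℕ) {v : En 3} (hv : v 2 ≠ 0) :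
    HasFDerivAt (Mdl c p q) (MdlD c p q v) v := by
  have h1 : HasFDerivAt (fun x : En 3 => x 1) (prj 1) v := (prj 1).hasFDerivAt
  have h2 : HasFDerivAt (fun x : En 3 => x 2) (prj 2) v := (prj 2).hasFDerivAt
  have hnum : HasFDerivAt (fun x : En 3 => c * (x 1) ^ p)
      ((c * ((p : ℝ) * (v 1) ^ (p - 1))) • prj 1) v := by
    simpa [smul_smul, Function.comp_def] using
      (((hasDerivAt_pow p (v 1)).const_mul c).comp_hasFDerivAt v h1)
  have hden : HasFDerivAt (fun x : En 3 => ((x 2) ^ q)⁻¹)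
      ((-(((v 2) ^ q) ^ 2)⁻¹ * ((q : ℝ) * (v 2) ^ (q - 1))) • prj 2) v := by
    have hq : HasDerivAt (fun y : ℝ => (y ^ q)⁻¹)
        (-(((v 2) ^ q) ^ 2)⁻¹ * ((q : ℝ) * (v 2) ^ (q - 1))) (v 2) :=
      (hasDerivAt_inv (pow_ne_zero q hv)).comp (v 2) (hasDerivAt_pow q (v 2))
    have := hq.comp_hasFDerivAt v h2; exact this
  have := hnum.mul hden
  have heq : (fun x : En 3 => c * (x 1) ^ p * ((x 2) ^ q)⁻¹) = Mdl c p q := by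
    funext x; simp [Mdl, div_eq_mul_inv]
  rw [show ((fun x : En 3 => c * (x 1) ^ p) * fun x : En 3 => ((x 2) ^ q)⁻¹) = Mdl c p q from heq] at this
  refine this.congr_fderiv (Eq.symm ?_)
  ext u
  simp only [MdlD, Mdl, ContinuousLinearMap.add_apply, ContinuousLinearMap.coe_smul',
    Pi.smul_apply, smul_eq_mul]
  rcases Nat.eq_zero_or_pos p with hp | hp
  · rcases Nat.eq_zero_or_pos q with hq | hq
    · subst hp; subst hq; simp
    · subst hp
      have : (v 2) ^ (q - 1) * (v 2) = (v 2) ^ q := by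
        rw [← pow_succ, Nat.sub_add_cancel hq]
      field_simp
      ring_nf
      rw [show q * 2 = 1 + q + (q - 1) from by omega, pow_add, pow_add, pow_one]
      ring
  · rcases Nat.eq_zero_or_pos q with hq | hq
    · subst hq
      simp only [Nat.cast_zero, mul_zero, zero_mul, neg_zero, zero_smul, smul_zero, zero_add,
        pow_zero, inv_one, one_smul, zero_sub, Nat.zero_sub, Nat.cast_ofNat, add_zero]
      ring_nf
    · have e1 : (v 1) ^ (p - 1) * (v 1) = (v 1) ^ p := by
        rw [← pow_succ, Nat.sub_add_cancel hp]
      have e2 : (v 2) ^ (q - 1) * (v 2) = (v 2) ^ q := by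
        rw [← pow_succ, Nat.sub_add_cancel hq]
      field_simp
      ring_nf
      rw [show q * 2 = 1 + q + (q - 1) from by omega, pow_add, pow_add, pow_one]
      ring

lemma prj_single (i j : Fin 3) : prj j (EuclideanSpace.single i (1:ℝ)) = if i = j then 1 else 0 := by
  simp [prj, EuclideanSpace.single_apply, eq_comm]

lemma pderivE_Mdl (i : Fin 3) (c : ℝ) (p q : ℕ) {v : En 3} (hv : v 2 ≠ 0) :
    pderivE i (Mdl c p q) v =
      if i = 1 then Mdl (c * p) (p - 1) q v
      else if i = 2 then Mdl (-(c * q)) p (q + 1) v else 0 := by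
  have h := (hasFDerivAt_Mdl c p q hv).fderiv
  show (fderiv ℝ (Mdl c p q) v) (EuclideanSpace.single i 1) = _
  rw [h]
  fin_cases i <;>
    simp [MdlD, prj_single]

lemma pderivE_congrU {f g : En 3 → ℝ} (h : ∀ x : En 3, x 2 ≠ 0 → f x = g x)
    {v : En 3} (hv : v 2 ≠ 0) (i : Fin 3) : pderivE i f v = pderivE i g v := by
  unfold pderivE
  congr 1
  apply Filter.EventuallyEq.fderiv_eq
  exact Filter.eventuallyEq_of_mem (isOpen_U.mem_nhds hv) h

def EqOnU (f : En 3 → ℝ) (c : ℝ) (p q : ℕ) : Prop :=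
  ∀ v : En 3, v 2 ≠ 0 → f v = Mdl c p q v

lemma EqOnU.pd1 {f c p q} (h : EqOnU f c p q) : EqOnU (pderivE 1 f) (c * p) (p - 1) q := by
  intro v hv
  rw [pderivE_congrU h hv 1, pderivE_Mdl 1 c p q hv]; simp

lemma EqOnU.pd2 {f c p q} (h : EqOnU f c p q) : EqOnU (pderivE 2 f) (-(c * q)) p (q + 1) := by
  intro v hv
  rw [pderivE_congrU h hv 2, pderivE_Mdl 2 c p q hv]; simp

lemma EqOnU.pd0 {f c p q} (h : EqOnU f c p q) : EqOnU (pderivE 0 f) 0 0 0 := by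
  intro v hv
  rw [pderivE_congrU h hv 0, pderivE_Mdl 0 c p q hv]; simp [Mdl]

def c2r : ℝ → ℕ → ℕ → ℝ
  | c, _, 0 => c
  | c, q, (b+1) => c2r (-(c * q)) (q + 1) b

def c1r : ℝ → ℕ → ℕ → ℝ
  | c, _, 0 => c
  | c, p, (b+1) => c1r (c * p) (p - 1) b

lemma EqOnU.iter2 {f c q} (p : ℕ) (h : EqOnU f c p q) (b : ℕ) :
    EqOnU ((pderivE 2)^[b] f) (c2r c q b) p (q + b) := by
  induction b generalizing f c q with
  | zero => simpa [c2r] using h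
  | succ b ih =>
    rw [Function.iterate_succ_apply, show q + (b + 1) = (q + 1) + b from by omega, c2r]
    exact ih h.pd2

lemma EqOnU.iter1 {f c p q} (h : EqOnU f c p q) (b : ℕ) :
    EqOnU ((pderivE 1)^[b] f) (c1r c p b) (p - b) q := by
  induction b generalizing f c p with
  | zero => simpa [c1r] using h
  | succ b ih =>
    rw [Function.iterate_succ_apply, show p - (b + 1) = p - 1 - b from by omega, c1r]
    exact ih h.pd1

lemma EqOnU.iter0 {f c p q} (h : EqOnU f c p q) (b : ℕ) :
    EqOnU ((pderivE 0)^[b] f) (if b = 0 then c else 0) (if b = 0 then p else 0)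
      (if b = 0 then q else 0) := by
  induction b generalizing f c p q with
  | zero => simpa using h
  | succ b ih =>
    rw [Function.iterate_succ_apply]
    simpa using ih h.pd0

def Kc (α : Fin 3 → ℕ) : ℝ := if α 0 = 0 then c1r (c2r 1 1 (α 2)) 3 (α 1) else 0
def Kp (α : Fin 3 → ℕ) : ℕ := if α 0 = 0 then 3 - α 1 else 0
def Kq (α : Fin 3 → ℕ) : ℕ := if α 0 = 0 then 1 + α 2 else 0

lemma pdMulti_model (α : Fin 3 → ℕ) : EqOnU (pdMulti α (fun v : En 3 => (v 1) ^ 3 / v 2))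
    (Kc α) (Kp α) (Kq α) := by
  have h0 : EqOnU (fun v : En 3 => (v 1) ^ 3 / v 2) 1 3 1 := by
    intro v hv; simp [Mdl]
  have h2 := h0.iter2 3 (α 2)
  have h1 := h2.iter1 (α 1)
  have h := h1.iter0 (α 0)
  show EqOnU ((pderivE 0)^[α 0] ((pderivE 1)^[α 1] ((pderivE 2)^[α 2] _))) _ _ _
  rcases Nat.eq_zero_or_pos (α 0) with ha | ha
  · rw [ha] at h ⊢
    simpa [Kc, Kp, Kq, ha, Nat.add_comm 1 (α 2)] using h
  · have hne : α 0 ≠ 0 := Nat.pos_iff_ne_zero.mp ha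
    simpa [Kc, Kp, Kq, hne] using h

lemma pdMulti_val (α : Fin 3 → ℕ) {v : En 3} (hv : v 2 ≠ 0) :
    pdMulti α (fun v : En 3 => (v 1) ^ 3 / v 2) v = Kc α * (v 1) ^ (Kp α) / (v 2) ^ (Kq α) :=
  pdMulti_model α v hv

lemma norm_sq3' (x : En 3) : ‖x‖ ^ 2 = ∑ j, (x j) ^ 2 := by
  rw [EuclideanSpace.norm_eq]
  rw [Real.sq_sqrt (by positivity)]
  simp [sq_abs]

lemma norm_sq3 (x : En 3) : ‖x‖ ^ 2 = (x 0) ^ 2 + (x 1) ^ 2 + (x 2) ^ 2 := by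
  rw [norm_sq3', Fin.sum_univ_three]

lemma coord_le_norm (x : En 3) (i : Fin 3) : |x i| ≤ ‖x‖ := by
  have h2 : |x i| ^ 2 ≤ ‖x‖ ^ 2 := by
    rw [norm_sq3', sq_abs]
    exact Finset.single_le_sum (f := fun j => (x j) ^ 2) (fun j _ => sq_nonneg _)
      (Finset.mem_univ i)
  nlinarith [abs_nonneg (x i), norm_nonneg x]

def sC (d : ℝ) : Set (En 3) := { v | (1 - d) * ‖v‖ < v 2 }

lemma sC_convex {d : ℝ} (hd : 0 < d) (hd1 : d < 1) : Convex ℝ (sC d) := by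
  intro x hx y hy a b ha hb hab
  have hax : a * ((1 - d) * ‖x‖) ≤ a * x 2 := mul_le_mul_of_nonneg_left hx.le ha
  have hby : b * ((1 - d) * ‖y‖) ≤ b * y 2 := mul_le_mul_of_nonneg_left hy.le hb
  have hn : ‖a • x + b • y‖ ≤ a * ‖x‖ + b * ‖y‖ := by
    calc ‖a • x + b • y‖ ≤ ‖a • x‖ + ‖b • y‖ := norm_add_le _ _
    _ = a * ‖x‖ + b * ‖y‖ := by rw [norm_smul, norm_smul, Real.norm_of_nonneg ha, Real.norm_of_nonneg hb]
  have happ : (a • x + b • y) 2 = a * x 2 + b * y 2 := by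
    simp [PiLp.add_apply, PiLp.smul_apply, smul_eq_mul]
  have hx2 : 0 < x 2 := lt_of_le_of_lt (mul_nonneg (by linarith) (norm_nonneg _)) hx
  have hy2 : 0 < y 2 := lt_of_le_of_lt (mul_nonneg (by linarith) (norm_nonneg _)) hy
  show (1 - d) * ‖a • x + b • y‖ < (a • x + b • y) 2
  rw [happ]
  rcases eq_or_lt_of_le ha with ha0 | ha0
  · have hb1 : b = 1 := by linarith
    have ha0' : a = 0 := ha0.symm
    subst hb1; subst ha0'
    calc (1 - d) * ‖(0:ℝ) • x + (1:ℝ) • y‖ ≤ (1 - d) * (0 * ‖x‖ + 1 * ‖y‖) := by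
          apply mul_le_mul_of_nonneg_left hn (by linarith)
    _ = (1 - d) * ‖y‖ := by ring
    _ < y 2 := hy
    _ = 0 * x 2 + 1 * y 2 := by ring
  · have h1 : (1 - d) * ‖a • x + b • y‖ ≤ (1 - d) * (a * ‖x‖ + b * ‖y‖) :=
      mul_le_mul_of_nonneg_left hn (by linarith)
    have h2 : a * ((1 - d) * ‖x‖) < a * x 2 := mul_lt_mul_of_pos_left hx ha0
    nlinarith

lemma sC_mem {d : ℝ} (hd : 0 < d) (hd1 : d ≤ 1/2) {v : En 3} (hv : v ∈ sC d) :
    0 < v 2 ∧ v 2 ≤ ‖v‖ ∧ ‖v‖ ≤ 2 * v 2 ∧ |v 1| ^ 2 ≤ 8 * d * (v 2) ^ 2 := by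
  have hv' : (1 - d) * ‖v‖ < v 2 := hv
  have h2n : |v 2| ≤ ‖v‖ := coord_le_norm v 2
  have hz : 0 < v 2 := lt_of_le_of_lt (mul_nonneg (by linarith) (norm_nonneg _)) hv'
  have h2n' : v 2 ≤ ‖v‖ := le_trans (le_abs_self _) h2n
  have hnv : ‖v‖ ≤ 2 * v 2 := by
    nlinarith [norm_nonneg v, mul_le_mul_of_nonneg_right hd1 (norm_nonneg v)]
  refine ⟨hz, h2n', hnv, ?_⟩
  have hsq : (v 1) ^ 2 ≤ ‖v‖ ^ 2 - (v 2) ^ 2 := by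
    rw [norm_sq3]; nlinarith [sq_nonneg (v 0)]
  have hbig : ((1 - d) * ‖v‖) ^ 2 < (v 2) ^ 2 := by
    have h0 : 0 ≤ (1 - d) * ‖v‖ := mul_nonneg (by linarith) (norm_nonneg _)
    nlinarith
  have hN2 : ‖v‖ ^ 2 ≤ 4 * (v 2) ^ 2 := by nlinarith [norm_nonneg v]
  rw [sq_abs]
  nlinarith [mul_le_mul_of_nonneg_left hN2 hd.le, sq_nonneg (d * ‖v‖)]

lemma two_coeff_norm (a b : ℝ) :
    ‖a • prj 1 + b • prj 2‖ ≤ |a| + |b| := by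
  apply ContinuousLinearMap.opNorm_le_bound _ (by positivity)
  intro u
  have h1 : |u 1| ≤ ‖u‖ := coord_le_norm u 1
  have h2 : |u 2| ≤ ‖u‖ := coord_le_norm u 2
  have : (a • prj 1 + b • prj 2) u = a * u 1 + b * u 2 := by
    simp [prj, smul_eq_mul]
  rw [this]
  have : |a * u 1 + b * u 2| ≤ |a| * |u 1| + |b| * |u 2| := by
    calc |a * u 1 + b * u 2| ≤ |a * u 1| + |b * u 2| := abs_add_le _ _
    _ = |a| * |u 1| + |b| * |u 2| := by rw [abs_mul, abs_mul]
  refine le_trans this ?_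
  have := abs_nonneg a; have := abs_nonneg b
  nlinarith

lemma Mdl_bound {η : ℝ} (hη : 0 ≤ η) (c : ℝ) (p q : ℕ) (hqp : q ≤ p) {v : En 3}
    (hz : 0 < v 2) (hy : |v 1| ≤ η * v 2) :
    |Mdl c p q v| ≤ |c| * η ^ p * (v 2) ^ (p - q) := by
  have hzq : (0:ℝ) < (v 2) ^ q := pow_pos hz q
  have h1 : |Mdl c p q v| = |c| * |v 1| ^ p / (v 2) ^ q := by
    rw [Mdl, abs_div, abs_mul, abs_pow, abs_of_pos hzq]
  rw [h1]
  have h2 : |v 1| ^ p ≤ (η * v 2) ^ p := pow_le_pow_left₀ (abs_nonneg _) hy p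
  have h3 : |c| * |v 1| ^ p / (v 2) ^ q ≤ |c| * (η * v 2) ^ p / (v 2) ^ q := by
    gcongr
  refine le_trans h3 (le_of_eq ?_)
  rw [mul_pow, pow_sub₀ _ (ne_of_gt hz) hqp]
  field_simp

lemma sCe_mem {ε : ℝ} (hε : 0 < ε) (hε1 : ε < 1) {v : En 3}
    (hv : v ∈ sC (ε ^ 2 / 1000000)) :
    0 < v 2 ∧ v 2 ≤ ‖v‖ ∧ ‖v‖ ≤ 2 * v 2 ∧ |v 1| ≤ ε / 100 * v 2 := by
  have hd : 0 < ε ^ 2 / 1000000 := by positivity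
  have hd1 : ε ^ 2 / 1000000 ≤ 1 / 2 := by nlinarith
  obtain ⟨h1, h2, h3, h4⟩ := sC_mem hd hd1 hv
  refine ⟨h1, h2, h3, ?_⟩
  have key : |v 1| ^ 2 ≤ (ε / 100 * v 2) ^ 2 := by nlinarith [sq_nonneg (v 2), sq_nonneg ε]
  nlinarith [abs_nonneg (v 1), mul_pos (show (0:ℝ) < ε / 100 by linarith) h1]

lemma T1y {ε : ℝ} (hε : 0 < ε) (hε1 : ε < 1) {w v : En 3}
    (hw : w ∈ sC (ε ^ 2 / 1000000)) (hv : v ∈ sC (ε ^ 2 / 1000000)) :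
    |Mdl 3 2 1 v - Mdl 3 2 1 w -
      (Mdl 6 1 1 w * (v 1 - w 1) + Mdl (-3) 2 2 w * (v 2 - w 2))| ≤ ε / 3 * ‖v - w‖ := by
  have hd : 0 < ε ^ 2 / 1000000 := by positivity
  have hd1 : ε ^ 2 / 1000000 < 1 := by nlinarith
  have hconv := sC_convex hd hd1
  have key := Convex.norm_image_sub_le_of_norm_hasFDerivWithin_le'
    (f := Mdl 3 2 1) (f' := fun x => MdlD 3 2 1 x)
    (φ := Mdl 6 1 1 w • prj 1 + Mdl (-3) 2 2 w • prj 2) (C := ε / 3)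
    (s := sC (ε ^ 2 / 1000000)) (x := w) (y := v)
    (fun x hx => (hasFDerivAt_Mdl 3 2 1 (ne_of_gt (sCe_mem hε hε1 hx).1)).hasFDerivWithinAt)
    ?_ hconv hw hv
  · have happ : (Mdl 6 1 1 w • prj 1 + Mdl (-3) 2 2 w • prj 2) (v - w)
        = Mdl 6 1 1 w * (v 1 - w 1) + Mdl (-3) 2 2 w * (v 2 - w 2) := by
      simp [prj, smul_eq_mul, PiLp.sub_apply]
    rw [happ] at key
    simpa [Real.norm_eq_abs] using key
  · intro x hx
    obtain ⟨hxz, _, _, hxy⟩ := sCe_mem hε hε1 hx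
    obtain ⟨hwz, _, _, hwy⟩ := sCe_mem hε hε1 hw
    have hrw : MdlD 3 2 1 x - (Mdl 6 1 1 w • prj 1 + Mdl (-3) 2 2 w • prj 2)
        = (Mdl 6 1 1 x - Mdl 6 1 1 w) • prj 1 + (Mdl (-3) 2 2 x - Mdl (-3) 2 2 w) • prj 2 := by
      ext u
      simp [MdlD, Mdl, prj, smul_eq_mul]
      push_cast
      ring
    rw [hrw]
    refine le_trans (two_coeff_norm _ _) ?_
    have hη : (0:ℝ) ≤ ε / 100 := by linarith
    have b1 := Mdl_bound hη 6 1 1 le_rfl hxz hxy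
    have b2 := Mdl_bound hη 6 1 1 le_rfl hwz hwy
    have b3 := Mdl_bound hη (-3) 2 2 le_rfl hxz hxy
    have b4 := Mdl_bound hη (-3) 2 2 le_rfl hwz hwy
    simp only [pow_one, Nat.sub_self, pow_zero, mul_one, abs_neg] at b1 b2 b3 b4
    have t1 : |Mdl 6 1 1 x - Mdl 6 1 1 w| ≤ |Mdl 6 1 1 x| + |Mdl 6 1 1 w| := abs_sub _ _
    have t2 : |Mdl (-3) 2 2 x - Mdl (-3) 2 2 w| ≤ |Mdl (-3) 2 2 x| + |Mdl (-3) 2 2 w| :=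
      abs_sub _ _
    have : |(6:ℝ)| = 6 := by norm_num
    have : |(3:ℝ)| = 3 := by norm_num
    nlinarith [abs_nonneg (Mdl 6 1 1 x), abs_nonneg (Mdl (-3) 2 2 x), sq_nonneg ε]

lemma T1z {ε : ℝ} (hε : 0 < ε) (hε1 : ε < 1) {w v : En 3}
    (hw : w ∈ sC (ε ^ 2 / 1000000)) (hv : v ∈ sC (ε ^ 2 / 1000000)) :
    |Mdl (-1) 3 2 v - Mdl (-1) 3 2 w -
      (Mdl (-3) 2 2 w * (v 1 - w 1) + Mdl 2 3 3 w * (v 2 - w 2))| ≤ ε / 3 * ‖v - w‖ := by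
  have hd : 0 < ε ^ 2 / 1000000 := by positivity
  have hd1 : ε ^ 2 / 1000000 < 1 := by nlinarith
  have hconv := sC_convex hd hd1
  have key := Convex.norm_image_sub_le_of_norm_hasFDerivWithin_le'
    (f := Mdl (-1) 3 2) (f' := fun x => MdlD (-1) 3 2 x)
    (φ := Mdl (-3) 2 2 w • prj 1 + Mdl 2 3 3 w • prj 2) (C := ε / 3)
    (s := sC (ε ^ 2 / 1000000)) (x := w) (y := v)
    (fun x hx => (hasFDerivAt_Mdl (-1) 3 2 (ne_of_gt (sCe_mem hε hε1 hx).1)).hasFDerivWithinAt)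
    ?_ hconv hw hv
  · have happ : (Mdl (-3) 2 2 w • prj 1 + Mdl 2 3 3 w • prj 2) (v - w)
        = Mdl (-3) 2 2 w * (v 1 - w 1) + Mdl 2 3 3 w * (v 2 - w 2) := by
      simp [prj, smul_eq_mul, PiLp.sub_apply]
    rw [happ] at key
    simpa [Real.norm_eq_abs] using key
  · intro x hx
    obtain ⟨hxz, _, _, hxy⟩ := sCe_mem hε hε1 hx
    obtain ⟨hwz, _, _, hwy⟩ := sCe_mem hε hε1 hw
    have hrw : MdlD (-1) 3 2 x - (Mdl (-3) 2 2 w • prj 1 + Mdl 2 3 3 w • prj 2)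
        = (Mdl (-3) 2 2 x - Mdl (-3) 2 2 w) • prj 1 + (Mdl 2 3 3 x - Mdl 2 3 3 w) • prj 2 := by
      ext u
      simp [MdlD, Mdl, prj, smul_eq_mul]
      ring
    rw [hrw]
    refine le_trans (two_coeff_norm _ _) ?_
    have hη : (0:ℝ) ≤ ε / 100 := by linarith
    have b1 := Mdl_bound hη (-3) 2 2 le_rfl hxz hxy
    have b2 := Mdl_bound hη (-3) 2 2 le_rfl hwz hwy
    have b3 := Mdl_bound hη 2 3 3 le_rfl hxz hxy
    have b4 := Mdl_bound hη 2 3 3 le_rfl hwz hwy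
    simp only [Nat.sub_self, pow_zero, mul_one, abs_neg] at b1 b2 b3 b4
    have t1 : |Mdl (-3) 2 2 x - Mdl (-3) 2 2 w| ≤ |Mdl (-3) 2 2 x| + |Mdl (-3) 2 2 w| :=
      abs_sub _ _
    have t2 : |Mdl 2 3 3 x - Mdl 2 3 3 w| ≤ |Mdl 2 3 3 x| + |Mdl 2 3 3 w| := abs_sub _ _
    rw [show |(3:ℝ)| = 3 from by norm_num] at b1 b2
    rw [show |(2:ℝ)| = 2 from by norm_num] at b3 b4
    nlinarith [sq_nonneg ε, sq_nonneg (ε/100), pow_pos hε 3, pow_pos hε 2,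
      abs_nonneg (Mdl (-3) 2 2 x), abs_nonneg (Mdl 2 3 3 x)]

set_option maxHeartbeats 2000000 in
lemma T0 {ε : ℝ} (hε : 0 < ε) (hε1 : ε < 1) {w v : En 3}
    (hw : w ∈ sC (ε ^ 2 / 1000000)) (hv : v ∈ sC (ε ^ 2 / 1000000)) :
    |Mdl 1 3 1 v - Mdl 1 3 1 w
      - (Mdl 3 2 1 w * (v 1 - w 1) + Mdl (-1) 3 2 w * (v 2 - w 2))
      - (Mdl 3 1 1 w * (v 1 - w 1) ^ 2 +
          (Mdl (-3) 2 2 w * ((v 1 - w 1) * (v 2 - w 2)) + Mdl 1 3 3 w * (v 2 - w 2) ^ 2))|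
      ≤ ε * ‖v - w‖ ^ 2 := by
  have hd : 0 < ε ^ 2 / 1000000 := by positivity
  have hd1 : ε ^ 2 / 1000000 < 1 := by nlinarith
  set s : Set (En 3) := sC (ε ^ 2 / 1000000) ∩ Metric.closedBall w ‖v - w‖ with hs
  have hconv : Convex ℝ s := (sC_convex hd hd1).inter (convex_closedBall _ _)
  have hws : w ∈ s := ⟨hw, Metric.mem_closedBall_self (norm_nonneg _)⟩
  have hvs : v ∈ s := ⟨hv, by simp [Metric.mem_closedBall, dist_eq_norm]⟩
  set G : En 3 → ℝ := fun x => Mdl 1 3 1 x -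
    (Mdl 3 1 1 w * (x 1 - w 1) ^ 2 +
      (Mdl (-3) 2 2 w * ((x 1 - w 1) * (x 2 - w 2)) + Mdl 1 3 3 w * (x 2 - w 2) ^ 2)) with hG
  set G' : En 3 → (En 3 →L[ℝ] ℝ) := fun x => MdlD 1 3 1 x -
    (Mdl 3 1 1 w • ((2 * (x 1 - w 1) ^ 1) • prj 1) +
      (Mdl (-3) 2 2 w • ((x 1 - w 1) • prj 2 + (x 2 - w 2) • prj 1) +
        Mdl 1 3 3 w • ((2 * (x 2 - w 2) ^ 1) • prj 2))) with hG'
  set φ : En 3 →L[ℝ] ℝ := Mdl 3 2 1 w • prj 1 + Mdl (-1) 3 2 w • prj 2 with hφ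
  have hder : ∀ x ∈ s, HasFDerivWithinAt G (G' x) s x := by
    intro x hx
    have hx2 : x 2 ≠ 0 := ne_of_gt (sCe_mem hε hε1 hx.1).1
    have hb1 : HasFDerivAt (fun y : En 3 => y 1 - w 1) (prj 1) x :=
      (prj 1).hasFDerivAt.sub_const (w 1)
    have hb2 : HasFDerivAt (fun y : En 3 => y 2 - w 2) (prj 2) x :=
      (prj 2).hasFDerivAt.sub_const (w 2)
    have hq1 : HasFDerivAt (fun y : En 3 => (y 1 - w 1) ^ 2)
        ((2 * (x 1 - w 1) ^ 1) • prj 1) x := by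
      simpa [Function.comp_def] using (hasDerivAt_pow 2 (x 1 - w 1)).comp_hasFDerivAt x hb1
    have hq3 : HasFDerivAt (fun y : En 3 => (y 2 - w 2) ^ 2)
        ((2 * (x 2 - w 2) ^ 1) • prj 2) x := by
      simpa [Function.comp_def] using (hasDerivAt_pow 2 (x 2 - w 2)).comp_hasFDerivAt x hb2
    have hq2 : HasFDerivAt (fun y : En 3 => (y 1 - w 1) * (y 2 - w 2))
        ((x 1 - w 1) • prj 2 + (x 2 - w 2) • prj 1) x := hb1.mul hb2
    exact ((hasFDerivAt_Mdl 1 3 1 hx2).sub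
      (((hq1.const_mul (Mdl 3 1 1 w))).add
        ((hq2.const_mul (Mdl (-3) 2 2 w)).add
          (hq3.const_mul (Mdl 1 3 3 w))))).hasFDerivWithinAt
  have hbound : ∀ x ∈ s, ‖G' x - φ‖ ≤ 2 * (ε / 3) * ‖v - w‖ := by
    intro x hx
    have hxw : ‖x - w‖ ≤ ‖v - w‖ := by
      have := hx.2
      simpa [Metric.mem_closedBall, dist_eq_norm] using this
    have hrw : G' x - φ =
        (Mdl 3 2 1 x - Mdl 3 2 1 w -
          (Mdl 6 1 1 w * (x 1 - w 1) + Mdl (-3) 2 2 w * (x 2 - w 2))) • prj 1 +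
        (Mdl (-1) 3 2 x - Mdl (-1) 3 2 w -
          (Mdl (-3) 2 2 w * (x 1 - w 1) + Mdl 2 3 3 w * (x 2 - w 2))) • prj 2 := by
      ext u
      simp [hG', hφ, MdlD, Mdl, prj, smul_eq_mul]
      push_cast
      ring
    rw [hrw]
    refine le_trans (two_coeff_norm _ _) ?_
    have k1 := T1y hε hε1 hw hx.1
    have k2 := T1z hε hε1 hw hx.1
    have hεn : (0:ℝ) ≤ ε / 3 := by linarith
    nlinarith [mul_le_mul_of_nonneg_left hxw hεn]
  have key := Convex.norm_image_sub_le_of_norm_hasFDerivWithin_le' hder hbound hconv hws hvs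
  have happ : φ (v - w) = Mdl 3 2 1 w * (v 1 - w 1) + Mdl (-1) 3 2 w * (v 2 - w 2) := by
    simp [hφ, prj, smul_eq_mul, PiLp.sub_apply]
  have hGv : G v - G w - φ (v - w) =
      Mdl 1 3 1 v - Mdl 1 3 1 w
      - (Mdl 3 2 1 w * (v 1 - w 1) + Mdl (-1) 3 2 w * (v 2 - w 2))
      - (Mdl 3 1 1 w * (v 1 - w 1) ^ 2 +
          (Mdl (-3) 2 2 w * ((v 1 - w 1) * (v 2 - w 2)) + Mdl 1 3 3 w * (v 2 - w 2) ^ 2)) := by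
    rw [happ, hG]
    ring
  rw [hGv] at key
  rw [Real.norm_eq_abs] at key
  refine le_trans key ?_
  nlinarith [norm_nonneg (v - w), sq_nonneg ‖v - w‖]

lemma mIdx0 : multiIdxLe 3 0 = {![0,0,0]} := by decide
lemma mIdx1 : multiIdxLe 3 1 = {![0,0,0], ![1,0,0], ![0,1,0], ![0,0,1]} := by decide
lemma mIdx2 : multiIdxLe 3 2 = {![0,0,0], ![1,0,0], ![0,1,0], ![0,0,1],
    ![2,0,0], ![1,1,0], ![1,0,1], ![0,2,0], ![0,1,1], ![0,0,2]} := by decide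

lemma cone_sub {ε : ℝ} (hε : 0 < ε) (hε1 : ε < 1) :
    coneS ({EuclideanSpace.single (2 : Fin 3) (1 : ℝ)} : Set (En 3)) (ε ^ 2 / 1000000) 1 ⊆
      sC (ε ^ 2 / 1000000) := by
  rintro v ⟨hv0, hv1, ω, hω, hvd⟩
  rw [Set.mem_singleton_iff] at hω
  subst hω
  have hcle := coord_le_norm (‖v‖⁻¹ • v - EuclideanSpace.single (2 : Fin 3) (1 : ℝ)) 2
  have happ : (‖v‖⁻¹ • v - EuclideanSpace.single (2 : Fin 3) (1 : ℝ)) 2 = ‖v‖⁻¹ * v 2 - 1 := by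
    simp [PiLp.sub_apply, PiLp.smul_apply, EuclideanSpace.single_apply, smul_eq_mul]
  rw [happ] at hcle
  have habs : |‖v‖⁻¹ * v 2 - 1| < ε ^ 2 / 1000000 := lt_of_le_of_lt hcle hvd
  have h1 : 1 - ε ^ 2 / 1000000 < ‖v‖⁻¹ * v 2 := by
    have := abs_lt.mp habs
    linarith [this.1]
  show (1 - ε ^ 2 / 1000000) * ‖v‖ < v 2
  have h2 : (1 - ε ^ 2 / 1000000) * ‖v‖ < (‖v‖⁻¹ * v 2) * ‖v‖ := by
    exact mul_lt_mul_of_pos_right h1 hv0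
  have h3 : (‖v‖⁻¹ * v 2) * ‖v‖ = v 2 := by
    field_simp
  linarith

lemma pd_bound_gen {ε : ℝ} (hε : 0 < ε) (hε1 : ε < 1) {v : En 3}
    (hv : v ∈ sC (ε ^ 2 / 1000000)) (c : ℝ) (p q : ℕ) (hqp : q ≤ p)
    (hc : |c| * (ε / 100) ^ p ≤ ε) :
    |c * v 1 ^ p / v 2 ^ q| ≤ ε * ‖v‖ ^ (p - q) := by
  obtain ⟨hz, hzn, _, hy⟩ := sCe_mem hε hε1 hv
  have hb := Mdl_bound (by linarith : (0:ℝ) ≤ ε / 100) c p q hqp hz hy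
  have hv2k : (v 2) ^ (p - q) ≤ ‖v‖ ^ (p - q) := pow_le_pow_left₀ hz.le hzn _
  have h1 : (0:ℝ) ≤ v 2 ^ (p - q) := (pow_pos hz _).le
  calc |c * v 1 ^ p / v 2 ^ q| = |Mdl c p q v| := rfl
  _ ≤ |c| * (ε / 100) ^ p * v 2 ^ (p - q) := hb
  _ ≤ ε * v 2 ^ (p - q) := mul_le_mul_of_nonneg_right hc h1
  _ ≤ ε * ‖v‖ ^ (p - q) := mul_le_mul_of_nonneg_left hv2k hε.le

lemma eta_bound {ε : ℝ} (hε : 0 < ε) (hε1 : ε < 1) (c : ℝ) (p : ℕ) (hp : 1 ≤ p)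
    (hc : |c| ≤ 10) : |c| * (ε / 100) ^ p ≤ ε := by
  have hx : (0:ℝ) ≤ (ε / 100) ^ p := by positivity
  have h2 : |c| * (ε / 100) ^ p ≤ 10 * (ε / 100) ^ p := mul_le_mul_of_nonneg_right hc hx
  have h3 : (ε / 100 : ℝ) ^ p ≤ ε / 100 := by
    calc (ε / 100 : ℝ) ^ p ≤ (ε / 100) ^ 1 :=
      pow_le_pow_of_le_one (by linarith) (by linarith) hp
    _ = ε / 100 := pow_one _
  linarith

lemma pd2_diff {ε : ℝ} (hε : 0 < ε) (hε1 : ε < 1) {v w : En 3}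
    (hv : v ∈ sC (ε ^ 2 / 1000000)) (hw : w ∈ sC (ε ^ 2 / 1000000)) (c : ℝ) (p : ℕ)
    (hp : 1 ≤ p) (hc : |c| ≤ 10) :
    |c * v 1 ^ p / v 2 ^ p - c * w 1 ^ p / w 2 ^ p| ≤ ε := by
  obtain ⟨hvz, _, _, hvy⟩ := sCe_mem hε hε1 hv
  obtain ⟨hwz, _, _, hwy⟩ := sCe_mem hε hε1 hw
  have hη : (0:ℝ) ≤ ε / 100 := by linarith
  have b1 := Mdl_bound hη c p p le_rfl hvz hvy
  have b2 := Mdl_bound hη c p p le_rfl hwz hwy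
  simp only [Nat.sub_self, pow_zero, mul_one] at b1 b2
  have h3 : (ε / 100 : ℝ) ^ p ≤ ε / 100 := by
    calc (ε / 100 : ℝ) ^ p ≤ (ε / 100) ^ 1 :=
      pow_le_pow_of_le_one (by linarith) (by linarith) hp
    _ = ε / 100 := pow_one _
  have h4 : |c| * (ε / 100) ^ p ≤ 10 * (ε / 100) :=
    mul_le_mul hc h3 (by positivity) (by norm_num)
  calc |c * v 1 ^ p / v 2 ^ p - c * w 1 ^ p / w 2 ^ p|
      = |Mdl c p p v - Mdl c p p w| := rfl
  _ ≤ |Mdl c p p v| + |Mdl c p p w| := abs_sub _ _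
  _ ≤ ε := by linarith

/-- `F(x,y,z) = y³/z` is 2-negligible for `Ω = {(0,0,1)}` on
`U = ℝ³ \ {z = 0}`. -/
theorem y3_div_z_negligible :
    ∀ ε : ℝ, 0 < ε → ε < 1 → ∃ δ > 0, ∃ r > 0,
      coneS ({EuclideanSpace.single (2 : Fin 3) (1 : ℝ)} : Set (En 3)) δ r ⊆
        { v : En 3 | v 2 ≠ 0 } ∧
      (∀ v ∈ coneS ({EuclideanSpace.single (2 : Fin 3) (1 : ℝ)} : Set (En 3)) δ r,
        ∀ α : Fin 3 → ℕ, mIdeg α ≤ 2 →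
          |pdMulti α (fun v : En 3 => (v 1) ^ 3 / v 2) v| ≤ ε * ‖v‖ ^ (2 - mIdeg α)) ∧
      (∀ v ∈ coneS ({EuclideanSpace.single (2 : Fin 3) (1 : ℝ)} : Set (En 3)) δ r,
        ∀ w ∈ coneS ({EuclideanSpace.single (2 : Fin 3) (1 : ℝ)} : Set (En 3)) δ r,
          v ≠ w → ∀ α : Fin 3 → ℕ, mIdeg α ≤ 2 →
            |pdMulti α (fun v : En 3 => (v 1) ^ 3 / v 2) v -
                taylorSum 2 (fun v : En 3 => (v 1) ^ 3 / v 2) α w v| ≤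
              ε * ‖v - w‖ ^ (2 - mIdeg α)) := by
  intro ε hε hε1
  refine ⟨ε ^ 2 / 1000000, by positivity, 1, one_pos, ?_, ?_, ?_⟩
  · intro v hv
    exact ne_of_gt (sCe_mem hε hε1 (cone_sub hε hε1 hv)).1
  · intro v hv α hα
    have hvs := cone_sub hε hε1 hv
    have hz : v 2 ≠ 0 := ne_of_gt (sCe_mem hε hε1 hvs).1
    rw [pdMulti_val α hz]
    have hsum : α 0 + α 1 + α 2 ≤ 2 := by
      simpa [mIdeg, Fin.sum_univ_three] using hα
    have hcases : (α 0 = 0 ∧ α 1 = 0 ∧ α 2 = 0) ∨ (α 0 = 0 ∧ α 1 = 1 ∧ α 2 = 0) ∨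
        (α 0 = 0 ∧ α 1 = 0 ∧ α 2 = 1) ∨ (α 0 = 0 ∧ α 1 = 2 ∧ α 2 = 0) ∨
        (α 0 = 0 ∧ α 1 = 1 ∧ α 2 = 1) ∨ (α 0 = 0 ∧ α 1 = 0 ∧ α 2 = 2) ∨ 1 ≤ α 0 := by
      omega
    rcases hcases with ⟨h0, h1, h2⟩ | ⟨h0, h1, h2⟩ | ⟨h0, h1, h2⟩ | ⟨h0, h1, h2⟩ |
      ⟨h0, h1, h2⟩ | ⟨h0, h1, h2⟩ | h0
    · rw [show mIdeg α = 0 from by simp [mIdeg, Fin.sum_univ_three, h0, h1, h2],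
        show Kc α = 1 from by norm_num [Kc, h0, h1, h2, c1r, c2r],
        show Kp α = 3 from by norm_num [Kp, h0, h1, h2],
        show Kq α = 1 from by norm_num [Kq, h0, h1, h2]]
      exact pd_bound_gen hε hε1 hvs 1 3 1 (by norm_num) (eta_bound hε hε1 _ _ (by norm_num) (by norm_num))
    · rw [show mIdeg α = 1 from by simp [mIdeg, Fin.sum_univ_three, h0, h1, h2],
        show Kc α = 3 from by norm_num [Kc, h0, h1, h2, c1r, c2r],
        show Kp α = 2 from by norm_num [Kp, h0, h1, h2],
        show Kq α = 1 from by norm_num [Kq, h0, h1, h2]]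
      exact pd_bound_gen hε hε1 hvs 3 2 1 (by norm_num) (eta_bound hε hε1 _ _ (by norm_num) (by norm_num))
    · rw [show mIdeg α = 1 from by simp [mIdeg, Fin.sum_univ_three, h0, h1, h2],
        show Kc α = -1 from by norm_num [Kc, h0, h1, h2, c1r, c2r],
        show Kp α = 3 from by norm_num [Kp, h0, h1, h2],
        show Kq α = 2 from by norm_num [Kq, h0, h1, h2]]
      exact pd_bound_gen hε hε1 hvs (-1) 3 2 (by norm_num) (eta_bound hε hε1 _ _ (by norm_num) (by norm_num))
    · rw [show mIdeg α = 2 from by simp [mIdeg, Fin.sum_univ_three, h0, h1, h2],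
        show Kc α = 6 from by norm_num [Kc, h0, h1, h2, c1r, c2r],
        show Kp α = 1 from by norm_num [Kp, h0, h1, h2],
        show Kq α = 1 from by norm_num [Kq, h0, h1, h2]]
      exact pd_bound_gen hε hε1 hvs 6 1 1 (by norm_num) (eta_bound hε hε1 _ _ (by norm_num) (by norm_num))
    · rw [show mIdeg α = 2 from by simp [mIdeg, Fin.sum_univ_three, h0, h1, h2],
        show Kc α = -3 from by norm_num [Kc, h0, h1, h2, c1r, c2r],
        show Kp α = 2 from by norm_num [Kp, h0, h1, h2],
        show Kq α = 2 from by norm_num [Kq, h0, h1, h2]]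
      exact pd_bound_gen hε hε1 hvs (-3) 2 2 (by norm_num) (eta_bound hε hε1 _ _ (by norm_num) (by norm_num))
    · rw [show mIdeg α = 2 from by simp [mIdeg, Fin.sum_univ_three, h0, h1, h2],
        show Kc α = 2 from by norm_num [Kc, h0, h1, h2, c1r, c2r],
        show Kp α = 3 from by norm_num [Kp, h0, h1, h2],
        show Kq α = 3 from by norm_num [Kq, h0, h1, h2]]
      exact pd_bound_gen hε hε1 hvs 2 3 3 (by norm_num) (eta_bound hε hε1 _ _ (by norm_num) (by norm_num))
    · rw [show Kc α = 0 from by simp [Kc, Nat.pos_iff_ne_zero.mp h0]]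
      simp only [zero_mul, zero_div, abs_zero]
      positivity
  · intro v hv w hw hvw α hα
    have hvs := cone_sub hε hε1 hv
    have hws := cone_sub hε hε1 hw
    have hvz' : v 2 ≠ 0 := ne_of_gt (sCe_mem hε hε1 hvs).1
    have hwz' : w 2 ≠ 0 := ne_of_gt (sCe_mem hε hε1 hws).1
    have hsum : α 0 + α 1 + α 2 ≤ 2 := by
      simpa [mIdeg, Fin.sum_univ_three] using hα
    have hcases : (α 0 = 0 ∧ α 1 = 0 ∧ α 2 = 0) ∨ (α 0 = 0 ∧ α 1 = 1 ∧ α 2 = 0) ∨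
        (α 0 = 0 ∧ α 1 = 0 ∧ α 2 = 1) ∨ (α 0 = 0 ∧ α 1 = 2 ∧ α 2 = 0) ∨
        (α 0 = 0 ∧ α 1 = 1 ∧ α 2 = 1) ∨ (α 0 = 0 ∧ α 1 = 0 ∧ α 2 = 2) ∨ 1 ≤ α 0 := by
      omega
    have hmats : ∀ γ : Fin 3 → ℕ,
        pdMulti (fun i => α i + γ i) (fun v : En 3 => (v 1) ^ 3 / v 2) w =
          Kc (fun i => α i + γ i) * w 1 ^ (Kp (fun i => α i + γ i)) /
            w 2 ^ (Kq (fun i => α i + γ i)) := fun γ => pdMulti_val _ hwz'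
    rcases hcases with ⟨h0, h1, h2⟩ | ⟨h0, h1, h2⟩ | ⟨h0, h1, h2⟩ | ⟨h0, h1, h2⟩ |
      ⟨h0, h1, h2⟩ | ⟨h0, h1, h2⟩ | h0
    · -- α = 0 : second-order Taylor
      have hk : mIdeg α = 0 := by simp [mIdeg, Fin.sum_univ_three, h0, h1, h2]
      rw [taylorSum, show 2 - mIdeg α = 2 from by omega, mIdx2,
        Finset.sum_insert (by decide), Finset.sum_insert (by decide),
        Finset.sum_insert (by decide), Finset.sum_insert (by decide),
        Finset.sum_insert (by decide), Finset.sum_insert (by decide),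
        Finset.sum_insert (by decide), Finset.sum_insert (by decide),
        Finset.sum_insert (by decide), Finset.sum_singleton]
      simp only [hmats]
      rw [pdMulti_val α hvz',
        show Kc α = 1 from by norm_num [Kc, h0, h1, h2, c1r, c2r],
        show Kp α = 3 from by norm_num [Kp, h0, h1, h2],
        show Kq α = 1 from by norm_num [Kq, h0, h1, h2]]
      have e1 : Kc (fun i => α i + ![0,0,0] i) = 1 ∧
          Kp (fun i => α i + ![0,0,0] i) = 3 ∧ Kq (fun i => α i + ![0,0,0] i) = 1 := by
        norm_num [Kc, Kp, Kq, h0, h1, h2, c1r, c2r, Matrix.cons_val_zero, Matrix.cons_val_one, Matrix.cons_val_two, Matrix.tail_cons, Matrix.head_cons]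
      have e2 : Kc (fun i => α i + ![1,0,0] i) = 0 := by
        norm_num [Kc, h0]
      have e3 : Kc (fun i => α i + ![0,1,0] i) = 3 ∧
          Kp (fun i => α i + ![0,1,0] i) = 2 ∧ Kq (fun i => α i + ![0,1,0] i) = 1 := by
        norm_num [Kc, Kp, Kq, h0, h1, h2, c1r, c2r, Matrix.cons_val_zero, Matrix.cons_val_one, Matrix.cons_val_two, Matrix.tail_cons, Matrix.head_cons]
      have e4 : Kc (fun i => α i + ![0,0,1] i) = -1 ∧
          Kp (fun i => α i + ![0,0,1] i) = 3 ∧ Kq (fun i => α i + ![0,0,1] i) = 2 := by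
        norm_num [Kc, Kp, Kq, h0, h1, h2, c1r, c2r, Matrix.cons_val_zero, Matrix.cons_val_one, Matrix.cons_val_two, Matrix.tail_cons, Matrix.head_cons]
      have e5 : Kc (fun i => α i + ![2,0,0] i) = 0 := by norm_num [Kc, h0]
      have e6 : Kc (fun i => α i + ![1,1,0] i) = 0 := by norm_num [Kc, h0]
      have e7 : Kc (fun i => α i + ![1,0,1] i) = 0 := by norm_num [Kc, h0]
      have e8 : Kc (fun i => α i + ![0,2,0] i) = 6 ∧
          Kp (fun i => α i + ![0,2,0] i) = 1 ∧ Kq (fun i => α i + ![0,2,0] i) = 1 := by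
        norm_num [Kc, Kp, Kq, h0, h1, h2, c1r, c2r, Matrix.cons_val_zero, Matrix.cons_val_one, Matrix.cons_val_two, Matrix.tail_cons, Matrix.head_cons]
      have e9 : Kc (fun i => α i + ![0,1,1] i) = -3 ∧
          Kp (fun i => α i + ![0,1,1] i) = 2 ∧ Kq (fun i => α i + ![0,1,1] i) = 2 := by
        norm_num [Kc, Kp, Kq, h0, h1, h2, c1r, c2r, Matrix.cons_val_zero, Matrix.cons_val_one, Matrix.cons_val_two, Matrix.tail_cons, Matrix.head_cons]
      have e10 : Kc (fun i => α i + ![0,0,2] i) = 2 ∧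
          Kp (fun i => α i + ![0,0,2] i) = 3 ∧ Kq (fun i => α i + ![0,0,2] i) = 3 := by
        norm_num [Kc, Kp, Kq, h0, h1, h2, c1r, c2r, Matrix.cons_val_zero, Matrix.cons_val_one, Matrix.cons_val_two, Matrix.tail_cons, Matrix.head_cons]
      rw [e1.1, e1.2.1, e1.2.2, e2, e3.1, e3.2.1, e3.2.2, e4.1, e4.2.1, e4.2.2, e5, e6,
        e7, e8.1, e8.2.1, e8.2.2, e9.1, e9.2.1, e9.2.2, e10.1, e10.2.1, e10.2.2]
      have key := T0 hε hε1 hws hvs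
      simp only [Mdl] at key
      refine le_trans (le_of_eq (congrArg abs ?_)) (le_trans key (le_of_eq ?_))
      · norm_num [Fin.prod_univ_three, Matrix.cons_val_zero, Matrix.cons_val_one, Matrix.cons_val_two, Matrix.tail_cons, Matrix.head_cons]
        ring
      · norm_num
    · -- α = (0,1,0)
      have hk : mIdeg α = 1 := by simp [mIdeg, Fin.sum_univ_three, h0, h1, h2]
      rw [taylorSum, show 2 - mIdeg α = 1 from by omega, mIdx1,
        Finset.sum_insert (by decide), Finset.sum_insert (by decide),
        Finset.sum_insert (by decide), Finset.sum_singleton]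
      simp only [hmats]
      rw [pdMulti_val α hvz',
        show Kc α = 3 from by norm_num [Kc, h0, h1, h2, c1r, c2r],
        show Kp α = 2 from by norm_num [Kp, h0, h1, h2],
        show Kq α = 1 from by norm_num [Kq, h0, h1, h2]]
      have e1 : Kc (fun i => α i + ![0,0,0] i) = 3 ∧
          Kp (fun i => α i + ![0,0,0] i) = 2 ∧ Kq (fun i => α i + ![0,0,0] i) = 1 := by
        norm_num [Kc, Kp, Kq, h0, h1, h2, c1r, c2r, Matrix.cons_val_zero, Matrix.cons_val_one, Matrix.cons_val_two, Matrix.tail_cons, Matrix.head_cons]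
      have e2 : Kc (fun i => α i + ![1,0,0] i) = 0 := by norm_num [Kc, h0]
      have e3 : Kc (fun i => α i + ![0,1,0] i) = 6 ∧
          Kp (fun i => α i + ![0,1,0] i) = 1 ∧ Kq (fun i => α i + ![0,1,0] i) = 1 := by
        norm_num [Kc, Kp, Kq, h0, h1, h2, c1r, c2r, Matrix.cons_val_zero, Matrix.cons_val_one, Matrix.cons_val_two, Matrix.tail_cons, Matrix.head_cons]
      have e4 : Kc (fun i => α i + ![0,0,1] i) = -3 ∧
          Kp (fun i => α i + ![0,0,1] i) = 2 ∧ Kq (fun i => α i + ![0,0,1] i) = 2 := by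
        norm_num [Kc, Kp, Kq, h0, h1, h2, c1r, c2r, Matrix.cons_val_zero, Matrix.cons_val_one, Matrix.cons_val_two, Matrix.tail_cons, Matrix.head_cons]
      rw [e1.1, e1.2.1, e1.2.2, e2, e3.1, e3.2.1, e3.2.2, e4.1, e4.2.1, e4.2.2]
      have key := T1y hε hε1 hws hvs
      simp only [Mdl] at key
      refine le_trans (le_of_eq (congrArg abs ?_)) (le_trans key ?_)
      · norm_num [Fin.prod_univ_three, Matrix.cons_val_zero, Matrix.cons_val_one, Matrix.cons_val_two, Matrix.tail_cons, Matrix.head_cons]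
        ring
      · rw [pow_one]
        nlinarith [norm_nonneg (v - w)]
    · -- α = (0,0,1)
      have hk : mIdeg α = 1 := by simp [mIdeg, Fin.sum_univ_three, h0, h1, h2]
      rw [taylorSum, show 2 - mIdeg α = 1 from by omega, mIdx1,
        Finset.sum_insert (by decide), Finset.sum_insert (by decide),
        Finset.sum_insert (by decide), Finset.sum_singleton]
      simp only [hmats]
      rw [pdMulti_val α hvz',
        show Kc α = -1 from by norm_num [Kc, h0, h1, h2, c1r, c2r],
        show Kp α = 3 from by norm_num [Kp, h0, h1, h2],
        show Kq α = 2 from by norm_num [Kq, h0, h1, h2]]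
      have e1 : Kc (fun i => α i + ![0,0,0] i) = -1 ∧
          Kp (fun i => α i + ![0,0,0] i) = 3 ∧ Kq (fun i => α i + ![0,0,0] i) = 2 := by
        norm_num [Kc, Kp, Kq, h0, h1, h2, c1r, c2r, Matrix.cons_val_zero, Matrix.cons_val_one, Matrix.cons_val_two, Matrix.tail_cons, Matrix.head_cons]
      have e2 : Kc (fun i => α i + ![1,0,0] i) = 0 := by norm_num [Kc, h0]
      have e3 : Kc (fun i => α i + ![0,1,0] i) = -3 ∧
          Kp (fun i => α i + ![0,1,0] i) = 2 ∧ Kq (fun i => α i + ![0,1,0] i) = 2 := by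
        norm_num [Kc, Kp, Kq, h0, h1, h2, c1r, c2r, Matrix.cons_val_zero, Matrix.cons_val_one, Matrix.cons_val_two, Matrix.tail_cons, Matrix.head_cons]
      have e4 : Kc (fun i => α i + ![0,0,1] i) = 2 ∧
          Kp (fun i => α i + ![0,0,1] i) = 3 ∧ Kq (fun i => α i + ![0,0,1] i) = 3 := by
        norm_num [Kc, Kp, Kq, h0, h1, h2, c1r, c2r, Matrix.cons_val_zero, Matrix.cons_val_one, Matrix.cons_val_two, Matrix.tail_cons, Matrix.head_cons]
      rw [e1.1, e1.2.1, e1.2.2, e2, e3.1, e3.2.1, e3.2.2, e4.1, e4.2.1, e4.2.2]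
      have key := T1z hε hε1 hws hvs
      simp only [Mdl] at key
      refine le_trans (le_of_eq (congrArg abs ?_)) (le_trans key ?_)
      · norm_num [Fin.prod_univ_three, Matrix.cons_val_zero, Matrix.cons_val_one, Matrix.cons_val_two, Matrix.tail_cons, Matrix.head_cons]
        ring
      · rw [pow_one]
        nlinarith [norm_nonneg (v - w)]
    · -- α = (0,2,0)
      have hk : mIdeg α = 2 := by simp [mIdeg, Fin.sum_univ_three, h0, h1, h2]
      rw [taylorSum, show 2 - mIdeg α = 0 from by omega, mIdx0, Finset.sum_singleton]
      simp only [hmats]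
      rw [pdMulti_val α hvz',
        show Kc α = 6 from by norm_num [Kc, h0, h1, h2, c1r, c2r],
        show Kp α = 1 from by norm_num [Kp, h0, h1, h2],
        show Kq α = 1 from by norm_num [Kq, h0, h1, h2]]
      have e1 : Kc (fun i => α i + ![0,0,0] i) = 6 ∧
          Kp (fun i => α i + ![0,0,0] i) = 1 ∧ Kq (fun i => α i + ![0,0,0] i) = 1 := by
        norm_num [Kc, Kp, Kq, h0, h1, h2, c1r, c2r, Matrix.cons_val_zero, Matrix.cons_val_one, Matrix.cons_val_two, Matrix.tail_cons, Matrix.head_cons]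
      rw [e1.1, e1.2.1, e1.2.2]
      have key := pd2_diff hε hε1 hvs hws 6 1 (by norm_num) (by norm_num)
      refine le_trans (le_of_eq (congrArg abs ?_)) (le_trans key (le_of_eq ?_))
      · norm_num [Fin.prod_univ_three, Matrix.cons_val_zero, Matrix.cons_val_one, Matrix.cons_val_two, Matrix.tail_cons, Matrix.head_cons]
      · norm_num
    · -- α = (0,1,1)
      have hk : mIdeg α = 2 := by simp [mIdeg, Fin.sum_univ_three, h0, h1, h2]
      rw [taylorSum, show 2 - mIdeg α = 0 from by omega, mIdx0, Finset.sum_singleton]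
      simp only [hmats]
      rw [pdMulti_val α hvz',
        show Kc α = -3 from by norm_num [Kc, h0, h1, h2, c1r, c2r],
        show Kp α = 2 from by norm_num [Kp, h0, h1, h2],
        show Kq α = 2 from by norm_num [Kq, h0, h1, h2]]
      have e1 : Kc (fun i => α i + ![0,0,0] i) = -3 ∧
          Kp (fun i => α i + ![0,0,0] i) = 2 ∧ Kq (fun i => α i + ![0,0,0] i) = 2 := by
        norm_num [Kc, Kp, Kq, h0, h1, h2, c1r, c2r, Matrix.cons_val_zero, Matrix.cons_val_one, Matrix.cons_val_two, Matrix.tail_cons, Matrix.head_cons]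
      rw [e1.1, e1.2.1, e1.2.2]
      have key := pd2_diff hε hε1 hvs hws (-3) 2 (by norm_num) (by norm_num)
      refine le_trans (le_of_eq (congrArg abs ?_)) (le_trans key (le_of_eq ?_))
      · norm_num [Fin.prod_univ_three, Matrix.cons_val_zero, Matrix.cons_val_one, Matrix.cons_val_two, Matrix.tail_cons, Matrix.head_cons]
      · norm_num
    · -- α = (0,0,2)
      have hk : mIdeg α = 2 := by simp [mIdeg, Fin.sum_univ_three, h0, h1, h2]
      rw [taylorSum, show 2 - mIdeg α = 0 from by omega, mIdx0, Finset.sum_singleton]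
      simp only [hmats]
      rw [pdMulti_val α hvz',
        show Kc α = 2 from by norm_num [Kc, h0, h1, h2, c1r, c2r],
        show Kp α = 3 from by norm_num [Kp, h0, h1, h2],
        show Kq α = 3 from by norm_num [Kq, h0, h1, h2]]
      have e1 : Kc (fun i => α i + ![0,0,0] i) = 2 ∧
          Kp (fun i => α i + ![0,0,0] i) = 3 ∧ Kq (fun i => α i + ![0,0,0] i) = 3 := by
        norm_num [Kc, Kp, Kq, h0, h1, h2, c1r, c2r, Matrix.cons_val_zero, Matrix.cons_val_one, Matrix.cons_val_two, Matrix.tail_cons, Matrix.head_cons]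
      rw [e1.1, e1.2.1, e1.2.2]
      have key := pd2_diff hε hε1 hvs hws 2 3 (by norm_num) (by norm_num)
      refine le_trans (le_of_eq (congrArg abs ?_)) (le_trans key (le_of_eq ?_))
      · norm_num [Fin.prod_univ_three, Matrix.cons_val_zero, Matrix.cons_val_one, Matrix.cons_val_two, Matrix.tail_cons, Matrix.head_cons]
      · norm_num
    · -- 1 ≤ α 0 : everything vanishes
      have hts : taylorSum 2 (fun v : En 3 => (v 1) ^ 3 / v 2) α w v = 0 := by
        rw [taylorSum]
        apply Finset.sum_eq_zero
        intro γ _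
        rw [hmats γ, show Kc (fun i => α i + γ i) = 0 from by
          have hne : ¬ (α 0 + γ 0 = 0) := by omega
          simp [Kc, hne, Nat.pos_iff_ne_zero.mp h0]]
        simp
      rw [hts, pdMulti_val α hvz',
        show Kc α = 0 from by simp [Kc, Nat.pos_iff_ne_zero.mp h0]]
      simp only [zero_mul, zero_div, sub_zero, abs_zero]
      positivity
end
end

section
/- (Whitney-negligible implies negligible.) Let U ⊂ ℝⁿ be open, Ω ⊂ S^{n−1}, and F ∈ C^m(U). Suppose that for all ε > 0 there exist δ, r > 0 and F_ε ∈ C^m(ℝⁿ \ {0}) such that Γ(Ω,δ,r) ⊂ U, |∂^α F_ε(x)| ≤ ε|x|^{m−|α|} for all x ≠ 0 and |α| ≤ m, and F_ε = F on Γ(Ω,δ,r). Then F is m-negligible for Ω: for all ε > 0 there exist δ, r > 0 with Γ(Ω,δ,r) ⊂ U such that |∂^α F(x)| ≤ ε|x|^{m−|α|} on Γ(Ω,δ,r) for |α| ≤ m, and there is a constant C₁ = C₁(m,n) with |∂^α F(x) − Σ_{|γ| ≤ m−|α|} (1/γ!)∂^{α+γ}F(y)(x−y)^γ| ≤ C₁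 ε |x−y|^{m−|α|} for all distinct x, y ∈ Γ(Ω,δ,r) and |α| ≤ m. -/
open scoped BigOperators
open MvPolynomial

noncomputable section

section Aux

open Set

variable {n : ℕ}

lemma abs_coord_le (x : En n) (i : Fin n) : |x i| ≤ ‖x‖ := by
  rw [EuclideanSpace.norm_eq]
  have h1 : |x i| = Real.sqrt (‖x i‖ ^ 2) := by
    rw [Real.sqrt_sq_eq_abs, Real.norm_eq_abs, abs_abs]
  rw [h1]
  exact Real.sqrt_le_sqrt (Finset.single_le_sum (f := fun j => ‖x j‖ ^ 2)
    (fun j _ => sq_nonneg _) (Finset.mem_univ i))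

lemma decomp_single (v : En n) :
    ∑ j, v j • EuclideanSpace.single j (1 : ℝ) = v := by
  have h := (EuclideanSpace.basisFun (Fin n) ℝ).sum_repr v
  simpa [EuclideanSpace.basisFun_apply, EuclideanSpace.basisFun_repr] using h

lemma mem_multiIdxLe {k : ℕ} {γ : Fin n → ℕ} :
    γ ∈ multiIdxLe n k ↔ ∑ i, γ i ≤ k := by
  unfold multiIdxLe
  simp only [Finset.mem_filter, Fintype.mem_piFinset, Finset.mem_range]
  constructor
  · exact fun h => h.2
  · intro h
    refine ⟨fun i => ?_, h⟩
    have hle : γ i ≤ ∑ j, γ j :=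
      Finset.single_le_sum (fun j _ => Nat.zero_le _) (Finset.mem_univ i)
    omega

lemma pderivE_congr {s : Set (En n)} (hs : IsOpen s) {F G : En n → ℝ}
    (h : Set.EqOn F G s) (i : Fin n) : Set.EqOn (pderivE i F) (pderivE i G) s := by
  intro x hx
  have hev : F =ᶠ[nhds x] G := Filter.eventuallyEq_of_mem (hs.mem_nhds hx) h
  simp only [pderivE, hev.fderiv_eq]

/-- Iterated first-order partials along a list. -/
def pdList (L : List (Fin n)) (F : En n → ℝ) : En n → ℝ := L.foldr pderivE F

lemma pdList_congr {s : Set (En n)} (hs : IsOpen s) {F G : En n → ℝ} (h : Set.EqOn F G s) :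
    ∀ L : List (Fin n), Set.EqOn (pdList L F) (pdList L G) s
  | [] => h
  | (i :: L) => pderivE_congr hs (pdList_congr hs h L) i

/-- The canonical list of a multi-index. -/
def mList (α : Fin n → ℕ) : List (Fin n) :=
  (List.finRange n).flatMap fun i => List.replicate (α i) i

lemma foldr_replicate (i : Fin n) (k : ℕ) (F : En n → ℝ) :
    (List.replicate k i).foldr pderivE F = (pderivE i)^[k] F := by
  induction k with
  | zero => rfl
  | succ k ih => rw [List.replicate_succ, List.foldr_cons, ih, Function.iterate_succ_apply']

lemma pdMulti_eq_pdList (α : Fin n → ℕ) (F : En n → ℝ) :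
    pdMulti α F = pdList (mList α) F := by
  unfold pdMulti pdList mList
  induction (List.finRange n) with
  | nil => rfl
  | cons a L ih => rw [List.flatMap_cons, List.foldr_append, List.foldr_cons, ← ih, foldr_replicate]

lemma pdMulti_congr {s : Set (En n)} (hs : IsOpen s) {F G : En n → ℝ}
    (h : Set.EqOn F G s) (α : Fin n → ℕ) : Set.EqOn (pdMulti α F) (pdMulti α G) s := by
  rw [pdMulti_eq_pdList, pdMulti_eq_pdList]
  exact pdList_congr hs h _

lemma length_mList (α : Fin n → ℕ) : (mList α).length = mIdeg α := by
  unfold mList mIdeg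
  rw [List.length_flatMap]
  simp only [List.length_replicate]
  rw [Fin.sum_univ_def]

lemma count_mList (α : Fin n → ℕ) (i : Fin n) : (mList α).count i = α i := by
  unfold mList
  rw [List.count_flatMap]
  rw [show (List.count i ∘ fun j : Fin n => List.replicate (α j) j)
      = (fun j => if j = i then α j else 0) from funext fun j => by
    simp only [Function.comp_apply, List.count_replicate, beq_iff_eq]]
  rw [← Fin.sum_univ_def, Finset.sum_ite_eq' Finset.univ i α]
  simp

lemma mList_add_single (α : Fin n → ℕ) (j : Fin n) :
    (mList fun i => α i + if i = j then 1 else 0).Perm (j :: mList α) := by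
  rw [List.perm_iff_count]
  intro a
  rw [count_mList, List.count_cons, count_mList]
  by_cases h : a = j
  · subst h; simp
  · simp [beq_iff_eq, h, Ne.symm h]

lemma mIdeg_add_single (α : Fin n → ℕ) (j : Fin n) :
    mIdeg (fun i => α i + if i = j then 1 else 0) = mIdeg α + 1 := by
  unfold mIdeg
  rw [Finset.sum_add_distrib, Finset.sum_ite_eq' Finset.univ j (fun _ => 1)]
  simp

lemma pderivE_contDiffOn {s : Set (En n)} (hs : IsOpen s) {F : En n → ℝ} {k : ℕ}
    (hF : ContDiffOn ℝ ((k : ℕ) + 1) F s) (i : Fin n) :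
    ContDiffOn ℝ (k : ℕ) (pderivE i F) s := by
  have h1 : ContDiffOn ℝ (k : ℕ) (fderiv ℝ F) s := hF.fderiv_of_isOpen hs le_rfl
  exact h1.clm_apply contDiffOn_const

lemma pdList_contDiffOn {s : Set (En n)} (hs : IsOpen s) :
    ∀ (L : List (Fin n)) {k : ℕ} {F : En n → ℝ},
      ContDiffOn ℝ ((k + L.length : ℕ)) F s → ContDiffOn ℝ (k : ℕ) (pdList L F) s
  | [], k, F, hF => by simpa [pdList] using hF
  | (i :: L), k, F, hF => by
      have hF' : ContDiffOn ℝ (((k + 1) + L.length : ℕ)) F s := by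
        have : (k + 1) + L.length = k + (i :: L).length := by
          rw [List.length_cons]; omega
        rw [this]; exact hF
      have h2 : ContDiffOn ℝ ((k : ℕ) + 1) (pdList L F) s := by
        exact_mod_cast pdList_contDiffOn hs L hF'
      exact pderivE_contDiffOn hs h2 i

lemma pderivE_swap {s : Set (En n)} (hs : IsOpen s) {F : En n → ℝ}
    (hF : ContDiffOn ℝ (2 : ℕ) F s) (i j : Fin n) {x : En n} (hx : x ∈ s) :
    pderivE i (pderivE j F) x = pderivE j (pderivE i F) x := by
  have hd1 : ContDiffOn ℝ (1 : ℕ) (fderiv ℝ F) s := by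
    refine hF.fderiv_of_isOpen hs ?_
    norm_num
  have hdF : DifferentiableAt ℝ (fderiv ℝ F) x :=
    (hd1.differentiableOn (by norm_num)).differentiableAt (hs.mem_nhds hx)
  have hev : ∀ᶠ y in nhds x, HasFDerivAt F (fderiv ℝ F y) y := by
    filter_upwards [hs.mem_nhds hx] with y hy
    exact ((hF.differentiableOn (by norm_num)).differentiableAt (hs.mem_nhds hy)).hasFDerivAt
  have hsymm := second_derivative_symmetric_of_eventually hev hdF.hasFDerivAt
  have key : ∀ a b : Fin n, pderivE a (pderivE b F) x
      = fderiv ℝ (fderiv ℝ F) x (EuclideanSpace.single a 1) (EuclideanSpace.single b 1) := by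
    intro a b
    show fderiv ℝ (fun y => fderiv ℝ F y (EuclideanSpace.single b 1)) x
        (EuclideanSpace.single a 1) = _
    rw [fderiv_clm_apply hdF (differentiableAt_const _)]
    simp
  rw [key, key, hsymm]

lemma pdList_perm {s : Set (En n)} (hs : IsOpen s) {L L' : List (Fin n)} (hp : L.Perm L') :
    ∀ {F : En n → ℝ}, ContDiffOn ℝ (L.length : ℕ) F s →
      Set.EqOn (pdList L F) (pdList L' F) s := by
  induction hp with
  | nil => intro F _ x _; rfl
  | cons a h ih =>
      intro F hF x hx
      refine pderivE_congr hs (ih ?_) a hx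
      exact hF.of_le (by simp only [List.length_cons]; exact_mod_cast Nat.le_succ _)
  | swap a b L =>
      intro F hF x hx
      show pderivE b (pderivE a (pdList L F)) x = pderivE a (pderivE b (pdList L F)) x
      refine pderivE_swap hs ?_ b a hx
      refine pdList_contDiffOn hs L ?_
      have : (2 + L.length : ℕ) = (b :: a :: L).length := by
        rw [List.length_cons, List.length_cons]; omega
      rw [this]; exact hF
  | trans h1 h2 ih1 ih2 =>
      intro F hF x hx
      refine (ih1 hF hx).trans (ih2 ?_ hx)
      rwa [← h1.length_eq]

lemma pderivE_pdMulti {s : Set (En n)} (hs : IsOpen s) {F : En n → ℝ} {α : Fin n → ℕ} {m : ℕ}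
    (hF : ContDiffOn ℝ (m : ℕ) F s) (hk : mIdeg α + 1 ≤ m) (j : Fin n) {x : En n} (hx : x ∈ s) :
    pderivE j (pdMulti α F) x = pdMulti (fun i => α i + if i = j then 1 else 0) F x := by
  have h1 : pdMulti (fun i => α i + if i = j then 1 else 0) F x = pdList (j :: mList α) F x := by
    rw [pdMulti_eq_pdList]
    refine pdList_perm hs (mList_add_single α j) ?_ hx
    refine hF.of_le ?_
    rw [length_mList, mIdeg_add_single]
    exact_mod_cast Nat.cast_le.mpr hk
  rw [h1]
  show pderivE j (pdMulti α F) x = pderivE j (pdList (mList α) F) x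
  rw [pdMulti_eq_pdList]

lemma isOpen_coneS (Ω : Set (En n)) (δ r : ℝ) : IsOpen (coneS Ω δ r) := by
  have h0 : IsOpen {x : En n | 0 < ‖x‖} := by
    have he : {x : En n | 0 < ‖x‖} = {(0 : En n)}ᶜ := by
      ext x; simp [norm_pos_iff]
    rw [he]; exact isOpen_compl_singleton
  have hcont : ContinuousOn (fun x : En n => ‖x‖⁻¹ • x) {x : En n | 0 < ‖x‖} := by
    refine ContinuousOn.smul (f := fun x : En n => ‖x‖⁻¹) ?_ continuousOn_id
    exact (continuous_norm.continuousOn).inv₀ fun x hx => ne_of_gt hx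
  have hU : IsOpen {z : En n | ∃ ω ∈ Ω, ‖z - ω‖ < δ} := by
    have he : {z : En n | ∃ ω ∈ Ω, ‖z - ω‖ < δ} = ⋃ ω ∈ Ω, Metric.ball ω δ := by
      ext z; simp [Metric.mem_ball, dist_eq_norm]
    rw [he]; exact isOpen_biUnion fun ω _ => Metric.isOpen_ball
  have he : coneS Ω δ r = ({x : En n | 0 < ‖x‖} ∩
      (fun x : En n => ‖x‖⁻¹ • x) ⁻¹' {z | ∃ ω ∈ Ω, ‖z - ω‖ < δ}) ∩ {x | ‖x‖ < r} := by
    ext x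
    simp only [coneS, Set.mem_setOf_eq, Set.mem_inter_iff, Set.mem_preimage]
    tauto
  rw [he]
  exact (hcont.isOpen_inter_preimage h0 hU).inter (isOpen_lt continuous_norm continuous_const)

end Aux

section Aux2

open Set

variable {n : ℕ}

lemma coord_line (y v : En n) (t : ℝ) (i : Fin n) : (y + t • v) i - y i = t * v i := by
  simp [PiLp.add_apply, PiLp.smul_apply, smul_eq_mul]

lemma taylorSum_line (m : ℕ) (F : En n → ℝ) (α : Fin n → ℕ) (y v : En n) (t : ℝ) :
    taylorSum m F α y (y + t • v)
      = ∑ γ ∈ multiIdxLe n (m - mIdeg α),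
          (((∏ i, Nat.factorial (γ i) : ℕ) : ℝ)⁻¹ * pdMulti (fun i => α i + γ i) F y *
            ∏ i, (v i) ^ γ i) * t ^ (∑ i, γ i) := by
  unfold taylorSum
  refine Finset.sum_congr rfl fun γ _ => ?_
  have h1 : ∏ i, ((y + t • v) i - y i) ^ γ i = t ^ (∑ i, γ i) * ∏ i, (v i) ^ γ i := by
    calc ∏ i, ((y + t • v) i - y i) ^ γ i = ∏ i, (t ^ γ i * (v i) ^ γ i) := by
          refine Finset.prod_congr rfl fun i _ => ?_
          rw [coord_line, mul_pow]
      _ = (∏ i, t ^ γ i) * ∏ i, (v i) ^ γ i := Finset.prod_mul_distrib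
      _ = t ^ (∑ i, γ i) * ∏ i, (v i) ^ γ i := by rw [Finset.prod_pow_eq_pow_sum]
  rw [h1]; ring

lemma sum_line_zero (K : ℕ) (B : (Fin n → ℕ) → ℝ) :
    ∑ γ ∈ multiIdxLe n K, B γ * (0 : ℝ) ^ (∑ i, γ i) = B (fun _ => 0) := by
  rw [Finset.sum_eq_single_of_mem (fun _ => 0) (mem_multiIdxLe.mpr (by simp))]
  · simp
  · intro γ _ hne
    have hs : ∑ i, γ i ≠ 0 := by
      intro h0
      exact hne (funext fun i => by
        have h := Finset.sum_eq_zero_iff.mp h0 i (Finset.mem_univ i)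
        simpa using h)
    rw [zero_pow hs, mul_zero]

lemma prod_fact_add_single (γ : Fin n → ℕ) (j : Fin n) :
    ∏ i, Nat.factorial (γ i + if i = j then 1 else 0)
      = (γ j + 1) * ∏ i, Nat.factorial (γ i) := by
  rw [← Finset.mul_prod_erase Finset.univ (fun i => Nat.factorial (γ i + if i = j then 1 else 0))
      (Finset.mem_univ j),
    ← Finset.mul_prod_erase Finset.univ (fun i => Nat.factorial (γ i)) (Finset.mem_univ j)]
  have h2 : ∏ i ∈ Finset.univ.erase j, Nat.factorial (γ i + if i = j then 1 else 0)
      = ∏ i ∈ Finset.univ.erase j, Nat.factorial (γ i) :=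
    Finset.prod_congr rfl fun i hi => by rw [if_neg (Finset.ne_of_mem_erase hi), Nat.add_zero]
  rw [h2]
  have h3 : γ j + (if j = j then 1 else 0) = γ j + 1 := by simp
  rw [h3, Nat.factorial_succ]
  ring

lemma prod_pow_add_single (γ : Fin n → ℕ) (j : Fin n) (w : Fin n → ℝ) :
    ∏ i, (w i) ^ (γ i + if i = j then 1 else 0) = w j * ∏ i, (w i) ^ γ i := by
  rw [← Finset.mul_prod_erase Finset.univ (fun i => (w i) ^ (γ i + if i = j then 1 else 0))
      (Finset.mem_univ j),
    ← Finset.mul_prod_erase Finset.univ (fun i => (w i) ^ γ i) (Finset.mem_univ j)]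
  have h2 : ∏ i ∈ Finset.univ.erase j, (w i) ^ (γ i + if i = j then 1 else 0)
      = ∏ i ∈ Finset.univ.erase j, (w i) ^ γ i :=
    Finset.prod_congr rfl fun i hi => by rw [if_neg (Finset.ne_of_mem_erase hi), Nat.add_zero]
  rw [h2]
  have h3 : γ j + (if j = j then 1 else 0) = γ j + 1 := by simp
  rw [h3, pow_succ]
  ring

lemma sum_fun_add_single (γ : Fin n → ℕ) (j : Fin n) :
    ∑ i, (γ i + if i = j then 1 else 0) = (∑ i, γ i) + 1 := by
  rw [Finset.sum_add_distrib, Finset.sum_ite_eq' Finset.univ j (fun _ => 1)]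
  simp

lemma comb {k : ℕ} (A : (Fin n → ℕ) → ℝ) (v : En n) (t : ℝ) :
    ∑ γ ∈ multiIdxLe n (k + 1),
        ((((∏ i, Nat.factorial (γ i) : ℕ)) : ℝ)⁻¹ * A γ * ∏ i, (v i) ^ γ i) *
          (((∑ i, γ i : ℕ) : ℝ) * t ^ ((∑ i, γ i) - 1))
      = ∑ j, v j * ∑ γ ∈ multiIdxLe n k,
          ((((∏ i, Nat.factorial (γ i) : ℕ)) : ℝ)⁻¹ *
              A (fun i => γ i + if i = j then 1 else 0) * ∏ i, (v i) ^ γ i) *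
            t ^ (∑ i, γ i) := by
  classical
  have hL : ∀ γ : Fin n → ℕ,
      ((((∏ i, Nat.factorial (γ i) : ℕ)) : ℝ)⁻¹ * A γ * ∏ i, (v i) ^ γ i) *
          (((∑ i, γ i : ℕ) : ℝ) * t ^ ((∑ i, γ i) - 1))
        = ∑ j, (γ j : ℝ) * (((((∏ i, Nat.factorial (γ i) : ℕ)) : ℝ)⁻¹ * A γ *
            ∏ i, (v i) ^ γ i) * t ^ ((∑ i, γ i) - 1)) := by
    intro γ
    rw [← Finset.sum_mul, ← Nat.cast_sum]
    ring
  rw [Finset.sum_congr rfl fun γ _ => hL γ, Finset.sum_comm]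
  refine Finset.sum_congr rfl fun jj _ => ?_
  have hfilter : ∑ γ ∈ multiIdxLe n (k + 1),
      (γ jj : ℝ) * (((((∏ i, Nat.factorial (γ i) : ℕ)) : ℝ)⁻¹ * A γ *
          ∏ i, (v i) ^ γ i) * t ^ ((∑ i, γ i) - 1))
    = ∑ γ ∈ (multiIdxLe n (k + 1)).filter (fun γ => γ jj ≠ 0),
      (γ jj : ℝ) * (((((∏ i, Nat.factorial (γ i) : ℕ)) : ℝ)⁻¹ * A γ *
          ∏ i, (v i) ^ γ i) * t ^ ((∑ i, γ i) - 1)) := by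
    refine (Finset.sum_filter_of_ne fun γ _ hf => ?_).symm
    intro h0
    apply hf
    rw [h0]
    simp
  rw [hfilter, Finset.mul_sum]
  refine Finset.sum_nbij' (fun γ => fun i => γ i - if i = jj then 1 else 0)
    (fun γ' => fun i => γ' i + if i = jj then 1 else 0) ?_ ?_ ?_ ?_ ?_
  · intro γ hγ
    rw [Finset.mem_filter, mem_multiIdxLe] at hγ
    rw [mem_multiIdxLe]
    have hj : 1 ≤ γ jj := Nat.one_le_iff_ne_zero.mpr hγ.2
    have hsi : ∑ i, (if i = jj then (1:ℕ) else 0) = 1 := by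
      rw [Finset.sum_ite_eq' Finset.univ jj (fun _ => 1)]; simp
    have h1 : ∑ i, (γ i - if i = jj then 1 else 0) + ∑ i, (if i = jj then (1:ℕ) else 0)
        = ∑ i, γ i := by
      rw [← Finset.sum_add_distrib]
      refine Finset.sum_congr rfl fun i _ => ?_
      by_cases h : i = jj
      · subst h; rw [if_pos rfl]; omega
      · rw [if_neg h]; omega
    rw [hsi] at h1
    show ∑ i, (γ i - if i = jj then 1 else 0) ≤ k
    omega
  · intro γ' hγ'
    rw [mem_multiIdxLe] at hγ'
    rw [Finset.mem_filter, mem_multiIdxLe]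
    constructor
    · rw [sum_fun_add_single]; omega
    · simp
  · intro γ hγ
    rw [Finset.mem_filter, mem_multiIdxLe] at hγ
    have hj : 1 ≤ γ jj := Nat.one_le_iff_ne_zero.mpr hγ.2
    funext i
    by_cases h : i = jj <;> simp [h] <;> omega
  · intro γ' _
    funext i
    by_cases h : i = jj <;> simp [h]
  · intro γ hγ
    rw [Finset.mem_filter, mem_multiIdxLe] at hγ
    have hj : 1 ≤ γ jj := Nat.one_le_iff_ne_zero.mpr hγ.2
    obtain ⟨γ', rfl⟩ : ∃ γ' : Fin n → ℕ, γ = fun i => γ' i + if i = jj then 1 else 0 := by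
      refine ⟨fun i => γ i - if i = jj then 1 else 0, ?_⟩
      funext i
      by_cases h : i = jj <;> simp [h] <;> omega
    have hpt : ∀ x, ((fun i => γ' i + if i = jj then 1 else 0) x) - (if x = jj then 1 else 0)
        = γ' x := fun x => by by_cases h : x = jj <;> simp [h]
    simp only [hpt]
    beta_reduce
    simp only [if_true]
    rw [prod_fact_add_single, prod_pow_add_single, sum_fun_add_single, Nat.add_sub_cancel]
    have hne : ((γ' jj : ℝ) + 1) ≠ 0 := by positivity
    have hne2 : ((∏ i, Nat.factorial (γ' i) : ℕ) : ℝ) ≠ 0 := by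
      have hpos : 0 < ∏ i, Nat.factorial (γ' i) := Finset.prod_pos fun i _ => Nat.factorial_pos _
      exact_mod_cast hpos.ne'
    push_cast
    field_simp

end Aux2

section Key

open Set

variable {n : ℕ}

lemma key_taylor {m : ℕ} {Fε : En n → ℝ}
    (hC : ContDiffOn ℝ (m : ℕ) Fε {x : En n | x ≠ 0})
    {ε : ℝ} (hε : 0 ≤ ε)
    (hb : ∀ x : En n, x ≠ 0 → ∀ α : Fin n → ℕ, mIdeg α ≤ m →
      |pdMulti α Fε x| ≤ ε * ‖x‖ ^ (m - mIdeg α)) :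
    ∀ k : ℕ, ∀ α : Fin n → ℕ, mIdeg α + k = m →
      ∀ y v : En n, (∀ t : ℝ, t ∈ Set.Icc (0:ℝ) 1 → y + t • v ≠ 0) →
      |pdMulti α Fε (y + v) - taylorSum m Fε α y (y + v)|
        ≤ 2 * (n + 1 : ℝ) ^ k * ε * ‖v‖ ^ k := by
  intro k
  induction k with
  | zero =>
    intro α hα y v hseg
    have hx1 : y + v ≠ 0 := by
      have h := hseg 1 (by norm_num)
      simpa using h
    have hy : y ≠ 0 := by
      have h := hseg 0 (by norm_num)
      simpa using h
    have hM : m - mIdeg α = 0 := by omega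
    have hMset : multiIdxLe n (m - mIdeg α) = {fun _ => 0} := by
      rw [hM]
      ext γ
      rw [mem_multiIdxLe, Finset.mem_singleton]
      constructor
      · intro h
        funext i
        have h2 := Finset.sum_eq_zero_iff.mp (Nat.le_zero.mp h) i (Finset.mem_univ i)
        simpa using h2
      · rintro rfl; simp
    have hT : taylorSum m Fε α y (y + v) = pdMulti α Fε y := by
      unfold taylorSum
      rw [hMset, Finset.sum_singleton]
      simp
    rw [hT]
    have h1 := hb (y + v) hx1 α (by omega)
    have h2 := hb y hy α (by omega)
    rw [hM, pow_zero, mul_one] at h1 h2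
    have habs : |pdMulti α Fε (y + v) - pdMulti α Fε y|
        ≤ |pdMulti α Fε (y + v)| + |pdMulti α Fε y| := by
      have h3 := abs_add_le (pdMulti α Fε (y + v)) (-(pdMulti α Fε y))
      simpa [sub_eq_add_neg] using h3
    calc |pdMulti α Fε (y + v) - pdMulti α Fε y|
        ≤ |pdMulti α Fε (y + v)| + |pdMulti α Fε y| := habs
      _ ≤ ε + ε := add_le_add h1 h2
      _ = 2 * (n + 1 : ℝ) ^ 0 * ε * ‖v‖ ^ 0 := by ring
  | succ k ih =>
    intro α hα y v hseg
    have hm1 : mIdeg α + 1 ≤ m := by omega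
    have hK : m - mIdeg α = k + 1 := by omega
    have hKj : ∀ j : Fin n, m - mIdeg (fun i => α i + if i = j then 1 else 0) = k := by
      intro j; rw [mIdeg_add_single]; omega
    have hopen : IsOpen {x : En n | x ≠ 0} := isOpen_ne
    have hsm : ContDiffOn ℝ (1 : ℕ) (pdMulti α Fε) {x : En n | x ≠ 0} := by
      rw [pdMulti_eq_pdList]
      refine pdList_contDiffOn hopen (mList α) ?_
      have hle : (1 + (mList α).length : ℕ) ≤ m := by rw [length_mList]; omega
      exact hC.of_le (by exact_mod_cast hle)
    set A : (Fin n → ℕ) → ℝ := fun γ => pdMulti (fun i => α i + γ i) Fε y with hA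
    -- derivative of the pdMulti part along the line
    have hgderiv : ∀ t ∈ Icc (0:ℝ) 1,
        HasDerivAt (fun u : ℝ => pdMulti α Fε (y + u • v))
          (∑ j, v j * pdMulti (fun i => α i + if i = j then 1 else 0) Fε (y + t • v)) t := by
      intro t ht
      have hx0 : y + t • v ≠ 0 := hseg t ht
      have hdiff : DifferentiableAt ℝ (pdMulti α Fε) (y + t • v) :=
        (hsm.differentiableOn (by norm_num)).differentiableAt (hopen.mem_nhds hx0)
      have hline : HasDerivAt (fun u : ℝ => y + u • v) v t := by
        simpa using ((hasDerivAt_id t).smul_const v).const_add y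
      have hcomp : HasDerivAt (fun u : ℝ => pdMulti α Fε (y + u • v))
          (fderiv ℝ (pdMulti α Fε) (y + t • v) v) t := by
        exact hdiff.hasFDerivAt.comp_hasDerivAt t hline
      have hval : fderiv ℝ (pdMulti α Fε) (y + t • v) v
          = ∑ j, v j * pdMulti (fun i => α i + if i = j then 1 else 0) Fε (y + t • v) := by
        have h0 : fderiv ℝ (pdMulti α Fε) (y + t • v) v
            = fderiv ℝ (pdMulti α Fε) (y + t • v) (∑ j, v j • EuclideanSpace.single j 1) :=
          congrArg _ (decomp_single v).symm
        rw [h0, map_sum]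
        refine Finset.sum_congr rfl fun j _ => ?_
        rw [map_smul, smul_eq_mul,
          show (fderiv ℝ (pdMulti α Fε) (y + t • v)) (EuclideanSpace.single j 1)
            = pderivE j (pdMulti α Fε) (y + t • v) from rfl,
          pderivE_pdMulti hopen hC hm1 j hx0]
      rw [← hval]
      exact hcomp
    -- the taylor sums along the line
    have htay : ∀ t : ℝ, taylorSum m Fε α y (y + t • v)
        = ∑ γ ∈ multiIdxLe n (k + 1),
            ((((∏ i, Nat.factorial (γ i) : ℕ)) : ℝ)⁻¹ * A γ * ∏ i, (v i) ^ γ i)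
              * t ^ (∑ i, γ i) := by
      intro t
      rw [taylorSum_line, hK]
    have htayj : ∀ (j : Fin n) (t : ℝ),
        taylorSum m Fε (fun i => α i + if i = j then 1 else 0) y (y + t • v)
        = ∑ γ ∈ multiIdxLe n k,
            ((((∏ i, Nat.factorial (γ i) : ℕ)) : ℝ)⁻¹ *
              A (fun i => γ i + if i = j then 1 else 0) * ∏ i, (v i) ^ γ i)
              * t ^ (∑ i, γ i) := by
      intro j t
      rw [taylorSum_line, hKj j]
      refine Finset.sum_congr rfl fun γ _ => ?_
      simp only [hA]
      have harg : (fun i => (α i + if i = j then 1 else 0) + γ i)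
          = fun i => α i + (γ i + if i = j then 1 else 0) := by funext i; ring
      rw [harg]
    -- derivative of the polynomial part
    have hP : ∀ t : ℝ, HasDerivAt
        (fun u : ℝ => ∑ γ ∈ multiIdxLe n (k + 1),
          ((((∏ i, Nat.factorial (γ i) : ℕ)) : ℝ)⁻¹ * A γ * ∏ i, (v i) ^ γ i)
            * u ^ (∑ i, γ i))
        (∑ γ ∈ multiIdxLe n (k + 1),
          ((((∏ i, Nat.factorial (γ i) : ℕ)) : ℝ)⁻¹ * A γ * ∏ i, (v i) ^ γ i) *
            (((∑ i, γ i : ℕ) : ℝ) * t ^ ((∑ i, γ i) - 1))) t := by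
      intro t
      refine HasDerivAt.fun_sum fun γ _ => ?_
      exact (hasDerivAt_pow (∑ i, γ i) t).const_mul _
    -- derivative of g
    have hg : ∀ t ∈ Icc (0:ℝ) 1, HasDerivAt
        (fun u : ℝ => pdMulti α Fε (y + u • v) - taylorSum m Fε α y (y + u • v))
        (∑ j, v j * (pdMulti (fun i => α i + if i = j then 1 else 0) Fε (y + t • v)
          - taylorSum m Fε (fun i => α i + if i = j then 1 else 0) y (y + t • v))) t := by
      intro t ht
      have h3 : HasDerivAt (fun u : ℝ => taylorSum m Fε α y (y + u • v))
          (∑ γ ∈ multiIdxLe n (k + 1),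
            ((((∏ i, Nat.factorial (γ i) : ℕ)) : ℝ)⁻¹ * A γ * ∏ i, (v i) ^ γ i) *
              (((∑ i, γ i : ℕ) : ℝ) * t ^ ((∑ i, γ i) - 1))) t := by
        have hfun : (fun u : ℝ => taylorSum m Fε α y (y + u • v))
            = fun u : ℝ => ∑ γ ∈ multiIdxLe n (k + 1),
                ((((∏ i, Nat.factorial (γ i) : ℕ)) : ℝ)⁻¹ * A γ * ∏ i, (v i) ^ γ i)
                  * u ^ (∑ i, γ i) := funext fun u => htay u
        rw [hfun]
        exact hP t
      have h4 := (hgderiv t ht).sub h3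
      have hval : ∑ j, v j * (pdMulti (fun i => α i + if i = j then 1 else 0) Fε (y + t • v)
            - taylorSum m Fε (fun i => α i + if i = j then 1 else 0) y (y + t • v))
          = (∑ j, v j * pdMulti (fun i => α i + if i = j then 1 else 0) Fε (y + t • v))
            - ∑ γ ∈ multiIdxLe n (k + 1),
                ((((∏ i, Nat.factorial (γ i) : ℕ)) : ℝ)⁻¹ * A γ * ∏ i, (v i) ^ γ i) *
                  (((∑ i, γ i : ℕ) : ℝ) * t ^ ((∑ i, γ i) - 1)) := by
        rw [comb A v t]
        rw [← Finset.sum_sub_distrib]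
        refine Finset.sum_congr rfl fun j _ => ?_
        rw [htayj j t]
        ring
      rw [hval]
      exact h4
    -- bound on the derivative
    have hDbound : ∀ t ∈ Icc (0:ℝ) 1,
        ‖∑ j, v j * (pdMulti (fun i => α i + if i = j then 1 else 0) Fε (y + t • v)
          - taylorSum m Fε (fun i => α i + if i = j then 1 else 0) y (y + t • v))‖
        ≤ (n : ℝ) * (2 * (n + 1 : ℝ) ^ k * ε * ‖v‖ ^ k) * ‖v‖ := by
      intro t ht
      rw [Real.norm_eq_abs]
      have hterm : ∀ j : Fin n,
          |v j * (pdMulti (fun i => α i + if i = j then 1 else 0) Fε (y + t • v)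
            - taylorSum m Fε (fun i => α i + if i = j then 1 else 0) y (y + t • v))|
          ≤ ‖v‖ * (2 * (n + 1 : ℝ) ^ k * ε * ‖v‖ ^ k) := by
        intro j
        have hseg' : ∀ s : ℝ, s ∈ Icc (0:ℝ) 1 → y + s • (t • v) ≠ 0 := by
          intro s hs
          rw [smul_smul]
          refine hseg (s * t) ?_
          constructor
          · exact mul_nonneg hs.1 ht.1
          · exact mul_le_one₀ hs.2 ht.1 ht.2
        have hIH := ih (fun i => α i + if i = j then 1 else 0)
          (by rw [mIdeg_add_single]; omega) y (t • v) hseg'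
        have hR : |pdMulti (fun i => α i + if i = j then 1 else 0) Fε (y + t • v)
            - taylorSum m Fε (fun i => α i + if i = j then 1 else 0) y (y + t • v)|
            ≤ 2 * (n + 1 : ℝ) ^ k * ε * ‖v‖ ^ k := by
          refine le_trans hIH ?_
          have hnv : ‖t • v‖ ≤ ‖v‖ := by
            rw [norm_smul, Real.norm_eq_abs]
            have h1 : |t| ≤ 1 := by rw [abs_of_nonneg ht.1]; exact ht.2
            nlinarith [norm_nonneg v]
          have hpow : ‖t • v‖ ^ k ≤ ‖v‖ ^ k := pow_le_pow_left₀ (norm_nonneg _) hnv k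
          have hcoef : (0:ℝ) ≤ 2 * (n + 1 : ℝ) ^ k * ε := by positivity
          nlinarith [hcoef, hpow]
        rw [abs_mul]
        exact mul_le_mul (abs_coord_le v j) hR (abs_nonneg _) (norm_nonneg _)
      calc |∑ j, v j * (pdMulti (fun i => α i + if i = j then 1 else 0) Fε (y + t • v)
            - taylorSum m Fε (fun i => α i + if i = j then 1 else 0) y (y + t • v))|
          ≤ ∑ j, |v j * (pdMulti (fun i => α i + if i = j then 1 else 0) Fε (y + t • v)
            - taylorSum m Fε (fun i => α i + if i = j then 1 else 0) y (y + t • v))| :=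
            Finset.abs_sum_le_sum_abs _ _
        _ ≤ ∑ _j : Fin n, ‖v‖ * (2 * (n + 1 : ℝ) ^ k * ε * ‖v‖ ^ k) :=
            Finset.sum_le_sum fun j _ => hterm j
        _ = (n : ℝ) * (2 * (n + 1 : ℝ) ^ k * ε * ‖v‖ ^ k) * ‖v‖ := by
            rw [Finset.sum_const, Finset.card_univ, Fintype.card_fin]
            simp [nsmul_eq_mul]
            ring
    -- FTC
    have hftc := norm_image_sub_le_of_norm_deriv_le_segment'
      (f := fun u : ℝ => pdMulti α Fε (y + u • v) - taylorSum m Fε α y (y + u • v))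
      (f' := fun t => ∑ j, v j * (pdMulti (fun i => α i + if i = j then 1 else 0) Fε (y + t • v)
          - taylorSum m Fε (fun i => α i + if i = j then 1 else 0) y (y + t • v)))
      (a := 0) (b := 1)
      (C := (n : ℝ) * (2 * (n + 1 : ℝ) ^ k * ε * ‖v‖ ^ k) * ‖v‖)
      (fun t ht => (hg t ht).hasDerivWithinAt)
      (fun t ht => hDbound t (Ico_subset_Icc_self ht))
      1 (right_mem_Icc.mpr zero_le_one)
    have hftc2 : ‖(pdMulti α Fε (y + (1:ℝ) • v) - taylorSum m Fε α y (y + (1:ℝ) • v))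
        - (pdMulti α Fε (y + (0:ℝ) • v) - taylorSum m Fε α y (y + (0:ℝ) • v))‖
        ≤ (n : ℝ) * (2 * (n + 1 : ℝ) ^ k * ε * ‖v‖ ^ k) * ‖v‖ * (1 - 0) := hftc
    have hg0 : pdMulti α Fε (y + (0:ℝ) • v) - taylorSum m Fε α y (y + (0:ℝ) • v) = 0 := by
      have hz : taylorSum m Fε α y (y + (0:ℝ) • v) = pdMulti α Fε y := by
        rw [htay 0]
        rw [sum_line_zero (k + 1) (fun γ =>
          (((∏ i, Nat.factorial (γ i) : ℕ)) : ℝ)⁻¹ * A γ * ∏ i, (v i) ^ γ i)]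
        simp [hA]
      rw [hz]
      simp
    have hg1 : y + (1:ℝ) • v = y + v := by rw [one_smul]
    rw [hg0, sub_zero, hg1, Real.norm_eq_abs] at hftc2
    refine le_trans hftc2 ?_
    have hP : (0:ℝ) ≤ (n + 1 : ℝ) ^ k * ε * (‖v‖ ^ k * ‖v‖) := by positivity
    calc (n : ℝ) * (2 * (n + 1 : ℝ) ^ k * ε * ‖v‖ ^ k) * ‖v‖ * (1 - 0)
        = 2 * (n : ℝ) * ((n + 1 : ℝ) ^ k * ε * (‖v‖ ^ k * ‖v‖)) := by ring
      _ ≤ 2 * ((n : ℝ) + 1) * ((n + 1 : ℝ) ^ k * ε * (‖v‖ ^ k * ‖v‖)) := by nlinarith [hP]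
      _ = 2 * (n + 1 : ℝ) ^ (k + 1) * ε * ‖v‖ ^ (k + 1) := by
          rw [pow_succ (n + 1 : ℝ) k, pow_succ ‖v‖ k]; ring

end Key

set_option maxHeartbeats 1000000

/-- Whitney-negligible implies negligible (with a constant `C₁ = C₁(m,n)`
in the Taylor remainder estimate). -/
theorem whitneyNegligible_implies_negligible {n m : ℕ} (U : Set (En n)) (hU : IsOpen U)
    (Ω : Set (En n)) (hΩ : Ω ⊆ Metric.sphere (0 : En n) 1)
    (F : En n → ℝ) (hF : ContDiffOn ℝ (m : ℕ∞) F U)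
    (hW : WhitneyNegligible m U Ω F) :
    ∃ C₁ > 0, ∀ ε > 0, ∃ δ > 0, ∃ r > 0,
      coneS Ω δ r ⊆ U ∧
      (∀ x ∈ coneS Ω δ r, ∀ α : Fin n → ℕ, mIdeg α ≤ m →
        |pdMulti α F x| ≤ ε * ‖x‖ ^ (m - mIdeg α)) ∧
      (∀ x ∈ coneS Ω δ r, ∀ y ∈ coneS Ω δ r, x ≠ y → ∀ α : Fin n → ℕ, mIdeg α ≤ m →
        |pdMulti α F x - taylorSum m F α y x| ≤ C₁ * ε * ‖x - y‖ ^ (m - mIdeg α)) := by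
  classical
  refine ⟨2 * (n + 1 : ℝ) ^ m + (2 ^ m + ((multiIdxLe n m).card : ℝ) * 3 ^ m) + 1,
    by positivity, ?_⟩
  intro ε hε
  obtain ⟨δ, hδ, r, hr, Fε, hsub, hCF, hball, heq⟩ := hW ε hε
  have hC : ContDiffOn ℝ (m : ℕ) Fε {x : En n | x ≠ 0} := by exact_mod_cast hCF
  have hΓ : IsOpen (coneS Ω δ r) := isOpen_coneS Ω δ r
  have heqon : Set.EqOn Fε F (coneS Ω δ r) := fun x hx => heq x hx
  have hpd : ∀ (α : Fin n → ℕ) (x : En n), x ∈ coneS Ω δ r → pdMulti α F x = pdMulti α Fε x :=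
    fun α x hx => ((pdMulti_congr hΓ heqon α) hx).symm
  have hne : ∀ x ∈ coneS Ω δ r, x ≠ 0 := by
    intro x hx h
    have h0 : 0 < ‖x‖ := hx.1
    rw [h] at h0
    simp at h0
  refine ⟨δ, hδ, r, hr, hsub, ?_, ?_⟩
  · intro x hx α hα
    rw [hpd α x hx]
    exact hball x (hne x hx) α hα
  · intro x hx y hy hxy α hα
    have hTeq : taylorSum m F α y x = taylorSum m Fε α y x := by
      unfold taylorSum
      refine Finset.sum_congr rfl fun γ _ => ?_
      rw [hpd (fun i => α i + γ i) y hy]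
    rw [hpd α x hx, hTeq]
    set K := m - mIdeg α with hKdef
    have hxpos : (0:ℝ) < ‖x‖ := hx.1
    have hvpos : (0:ℝ) < ‖x - y‖ := by
      rw [norm_pos_iff]; exact sub_ne_zero_of_ne hxy
    by_cases hcase : ‖x - y‖ < ‖x‖ / 2
    · -- segment case
      have hseg : ∀ t : ℝ, t ∈ Set.Icc (0:ℝ) 1 → y + t • (x - y) ≠ 0 := by
        intro t ht h0
        have h1 : x - (y + t • (x - y)) = (1 - t) • (x - y) := by module
        have h2 : ‖x‖ = ‖x - (y + t • (x - y))‖ := by rw [h0]; simp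
        rw [h1, norm_smul, Real.norm_eq_abs] at h2
        have h3 : |1 - t| ≤ 1 := by
          rw [abs_of_nonneg (by linarith [ht.2])]
          linarith [ht.1]
        nlinarith [norm_nonneg (x - y)]
      have hkey := key_taylor hC (le_of_lt hε) hball K α (by omega) y (x - y) hseg
      rw [show y + (x - y) = x by abel] at hkey
      refine le_trans hkey ?_
      have hpow : (n + 1 : ℝ) ^ K ≤ (n + 1 : ℝ) ^ m :=
        pow_le_pow_right₀ (by linarith [Nat.cast_nonneg (α := ℝ) n]) (by omega)
      have hC1 : 2 * (n + 1 : ℝ) ^ K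
          ≤ 2 * (n + 1 : ℝ) ^ m + (2 ^ m + ((multiIdxLe n m).card : ℝ) * 3 ^ m) + 1 := by
        have hnn : (0:ℝ) ≤ 2 ^ m + ((multiIdxLe n m).card : ℝ) * 3 ^ m := by positivity
        nlinarith [hpow]
      have hnn2 : (0:ℝ) ≤ ε * ‖x - y‖ ^ K := by positivity
      nlinarith [mul_le_mul_of_nonneg_right hC1 hnn2]
    · -- crude case
      push_neg at hcase
      have hx2 : ‖x‖ ≤ 2 * ‖x - y‖ := by linarith
      have hy3 : ‖y‖ ≤ 3 * ‖x - y‖ := by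
        have h4 : ‖y‖ - ‖x‖ ≤ ‖y - x‖ := norm_sub_norm_le y x
        rw [norm_sub_rev] at h4
        linarith
      have h1 : |pdMulti α Fε x| ≤ 2 ^ m * ε * ‖x - y‖ ^ K := by
        refine le_trans (hball x (hne x hx) α hα) ?_
        calc ε * ‖x‖ ^ K ≤ ε * (2 * ‖x - y‖) ^ K :=
              mul_le_mul_of_nonneg_left (pow_le_pow_left₀ (norm_nonneg x) hx2 K) (le_of_lt hε)
          _ = 2 ^ K * ε * ‖x - y‖ ^ K := by rw [mul_pow]; ring
          _ ≤ 2 ^ m * ε * ‖x - y‖ ^ K := by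
              have h2 : (2:ℝ) ^ K ≤ 2 ^ m := pow_le_pow_right₀ one_le_two (by omega)
              have h3 : (0:ℝ) ≤ ε * ‖x - y‖ ^ K := by positivity
              nlinarith [mul_le_mul_of_nonneg_right h2 h3]
      have hterm : ∀ γ ∈ multiIdxLe n K,
          |((∏ i, Nat.factorial (γ i) : ℕ) : ℝ)⁻¹ * pdMulti (fun i => α i + γ i) Fε y *
            ∏ i, (x i - y i) ^ γ i| ≤ 3 ^ m * ε * ‖x - y‖ ^ K := by
        intro γ hγ
        rw [mem_multiIdxLe] at hγ
        have hdeg : mIdeg (fun i => α i + γ i) = mIdeg α + ∑ i, γ i := by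
          unfold mIdeg; rw [Finset.sum_add_distrib]
        have hAb := hball y (hne y hy) (fun i => α i + γ i) (by rw [hdeg]; omega)
        rw [hdeg] at hAb
        have hexp : m - (mIdeg α + ∑ i, γ i) = K - ∑ i, γ i := by omega
        rw [hexp] at hAb
        have hc : |((∏ i, Nat.factorial (γ i) : ℕ) : ℝ)⁻¹| ≤ 1 := by
          rw [abs_of_nonneg (by positivity)]
          have hone : (1:ℝ) ≤ ((∏ i, Nat.factorial (γ i) : ℕ) : ℝ) := by
            have : 1 ≤ ∏ i, Nat.factorial (γ i) :=
              Nat.one_le_iff_ne_zero.mpr (Finset.prod_ne_zero_iff.mpr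
                fun i _ => (Nat.factorial_pos _).ne')
            exact_mod_cast this
          exact inv_le_one_of_one_le₀ hone
        have hprod : |∏ i, (x i - y i) ^ γ i| ≤ ‖x - y‖ ^ (∑ i, γ i) := by
          rw [Finset.abs_prod, ← Finset.prod_pow_eq_pow_sum]
          refine Finset.prod_le_prod (fun i _ => abs_nonneg _) fun i _ => ?_
          rw [abs_pow]
          refine pow_le_pow_left₀ (abs_nonneg _) ?_ _
          have hco : x i - y i = (x - y) i := by simp [PiLp.sub_apply]
          rw [hco]
          exact abs_coord_le (x - y) i
        calc |((∏ i, Nat.factorial (γ i) : ℕ) : ℝ)⁻¹ * pdMulti (fun i => α i + γ i) Fε y *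
              ∏ i, (x i - y i) ^ γ i|
            = |((∏ i, Nat.factorial (γ i) : ℕ) : ℝ)⁻¹| * |pdMulti (fun i => α i + γ i) Fε y| *
              |∏ i, (x i - y i) ^ γ i| := by rw [abs_mul, abs_mul]
          _ ≤ 1 * (ε * ‖y‖ ^ (K - ∑ i, γ i)) * ‖x - y‖ ^ (∑ i, γ i) := by
              refine mul_le_mul (mul_le_mul hc hAb (abs_nonneg _) (by norm_num)) hprod
                (abs_nonneg _) (by positivity)
          _ ≤ 1 * (ε * (3 * ‖x - y‖) ^ (K - ∑ i, γ i)) * ‖x - y‖ ^ (∑ i, γ i) := by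
              have := pow_le_pow_left₀ (norm_nonneg y) hy3 (K - ∑ i, γ i)
              have hnn : (0:ℝ) ≤ ‖x - y‖ ^ (∑ i, γ i) := by positivity
              nlinarith [mul_le_mul_of_nonneg_left this (le_of_lt hε)]
          _ = 3 ^ (K - ∑ i, γ i) * ε * (‖x - y‖ ^ (K - ∑ i, γ i) * ‖x - y‖ ^ (∑ i, γ i)) := by
              rw [mul_pow]; ring
          _ = 3 ^ (K - ∑ i, γ i) * ε * ‖x - y‖ ^ K := by
              rw [← pow_add]
              congr 2
              omega
          _ ≤ 3 ^ m * ε * ‖x - y‖ ^ K := by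
              have h2 : (3:ℝ) ^ (K - ∑ i, γ i) ≤ 3 ^ m :=
                pow_le_pow_right₀ (by norm_num) (by omega)
              have h3 : (0:ℝ) ≤ ε * ‖x - y‖ ^ K := by positivity
              nlinarith [mul_le_mul_of_nonneg_right h2 h3]
      have h2 : |taylorSum m Fε α y x|
          ≤ ((multiIdxLe n m).card : ℝ) * (3 ^ m * ε * ‖x - y‖ ^ K) := by
        unfold taylorSum
        refine le_trans (Finset.abs_sum_le_sum_abs _ _) ?_
        refine le_trans (Finset.sum_le_sum hterm) ?_
        rw [Finset.sum_const, nsmul_eq_mul]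
        have hcard : ((multiIdxLe n K).card : ℝ) ≤ ((multiIdxLe n m).card : ℝ) := by
          have hsub2 : multiIdxLe n K ⊆ multiIdxLe n m := fun γ hγ =>
            mem_multiIdxLe.mpr (le_trans (mem_multiIdxLe.mp hγ) (by omega))
          exact_mod_cast Finset.card_le_card hsub2
        have h3 : (0:ℝ) ≤ 3 ^ m * ε * ‖x - y‖ ^ K := by positivity
        nlinarith [mul_le_mul_of_nonneg_right hcard h3]
      have habs : |pdMulti α Fε x - taylorSum m Fε α y x|
          ≤ |pdMulti α Fε x| + |taylorSum m Fε α y x| := by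
        have h := abs_add_le (pdMulti α Fε x) (-(taylorSum m Fε α y x))
        simpa [sub_eq_add_neg] using h
      calc |pdMulti α Fε x - taylorSum m Fε α y x|
          ≤ |pdMulti α Fε x| + |taylorSum m Fε α y x| := habs
        _ ≤ 2 ^ m * ε * ‖x - y‖ ^ K
            + ((multiIdxLe n m).card : ℝ) * (3 ^ m * ε * ‖x - y‖ ^ K) := add_le_add h1 h2
        _ = (2 ^ m + ((multiIdxLe n m).card : ℝ) * 3 ^ m) * (ε * ‖x - y‖ ^ K) := by ring
        _ ≤ (2 * (n + 1 : ℝ) ^ m + (2 ^ m + ((multiIdxLe n m).card : ℝ) * 3 ^ m) + 1)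
            * (ε * ‖x - y‖ ^ K) := by
            refine mul_le_mul_of_nonneg_right ?_ (by positivity)
            have hz : (0:ℝ) ≤ 2 * (n + 1 : ℝ) ^ m := by positivity
            linarith
        _ = (2 * (n + 1 : ℝ) ^ m + (2 ^ m + ((multiIdxLe n m).card : ℝ) * 3 ^ m) + 1)
            * ε * ‖x - y‖ ^ K := by ring
end
end
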